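/- arXiv:0801.3964 — 7 statements merged into one kernel-verified Lean document; each statement's English description precedes it below -/
import Mathlib

section
/- The generalized Chebyshev polynomials satisfy the cluster-mesh relation: for all n ≥ 1, P_n(t_0, ..., t_{n-1}) · P_n(t_1, ..., t_n) − 1 = P_{n+1}(t_0, ..., t_n) · P_{n-1}(t_1, ..., t_{n-1}), as an identity in the polynomial ring ℤ[t_0, ..., t_n]. -/
open MvPolynomial Polynomial

/-- Generalized Chebyshev evaluation: `cheb n t = P_n(t 0, ..., t (n-1))`,
where `P_0 = 1`, `P_1(t_0) = t_0`, and
`P_{n+1}(t_0,...,t_n) = t_n * P_n(t_0,...,t_{n-1}) - P_{n-1}(t_0,...,t_{n-2})`. -/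
def cheb {R : Type*} [CommRing R] : ℕ → (ℕ → R) → R
  | 0, _ => 1
  | 1, t => t 0
  | (n + 2), t => t (n + 1) * cheb (n + 1) t - cheb n t

/-- the cluster-mesh relation in `ℤ[t_0, ..., t_n]`. -/
theorem cheb_cluster_mesh (n : ℕ) (hn : 1 ≤ n) :
    cheb n (fun k => (X k : MvPolynomial ℕ ℤ)) *
        cheb n (fun k => (X (k + 1) : MvPolynomial ℕ ℤ)) - 1 =
      cheb (n + 1) (fun k => (X k : MvPolynomial ℕ ℤ)) *
        cheb (n - 1) (fun k => (X (k + 1) : MvPolynomial ℕ ℤ)) := by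
  induction n, hn using Nat.le_induction with
  | base => simp [cheb]; ring
  | succ n hn ih =>
    obtain ⟨m, rfl⟩ : ∃ m, n = m + 1 := ⟨n - 1, (Nat.succ_pred_eq_of_pos hn).symm⟩
    simp only [cheb, Nat.add_sub_cancel] at ih ⊢
    linear_combination ih
end

section
/- Let F be a field and let (x_i)_{i∈ℤ} be nonzero elements of F. Define x_{i,0} = 1, x_{i,1} = x_i, and suppose for all i ∈ ℤ and n ≥ 1 the cluster-mesh relation x_{i,n} · x_{i+1,n} = x_{i,n+1} · x_{i+1,n-1} + 1 holds, with all x_{i,n} nonzero. Then for every i ∈ ℤ and n ≥ 1, x_{i,n} = P_n(x_i, x_{i+1}, ..., x_{i+n-1}), where P_n is the n-th generalized Chebyshev polynomial. -/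
open MvPolynomial Polynomial

lemma cheb_identity {R : Type*} [CommRing R] (t : ℕ → R) (n : ℕ) :
    cheb (n+1) t * cheb (n+1) (fun k => t (k+1)) =
      cheb (n+2) t * cheb n (fun k => t (k+1)) + 1 := by
  induction n with
  | zero => simp [cheb]; ring
  | succ m ih =>
    have h1 : cheb (m+3) t = t (m+2) * cheb (m+2) t - cheb (m+1) t := rfl
    have h2 : cheb (m+2) (fun k => t (k+1)) =
        t (m+2) * cheb (m+1) (fun k => t (k+1)) - cheb m (fun k => t (k+1)) := rfl
    rw [h1, h2]
    linear_combination ih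

lemma cheb_shift {F : Type*} [CommRing F] (x : ℤ → F) (i : ℤ) (m : ℕ) :
    cheb m (fun k => (fun k : ℕ => x (i + k)) (k+1)) = cheb m (fun k => x ((i+1) + k)) := by
  congr 1
  funext k
  congr 1
  push_cast
  ring

/-- a nonvanishing family in a field satisfying the cluster-mesh
recurrence is given by generalized Chebyshev polynomials in the first row. -/
theorem clusterMesh_eq_cheb {F : Type*} [Field F] (x : ℤ → F) (y : ℤ → ℕ → F)
    (hx : ∀ i, x i ≠ 0) (hy : ∀ i n, y i n ≠ 0)
    (hy0 : ∀ i, y i 0 = 1) (hy1 : ∀ i, y i 1 = x i)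
    (hrec : ∀ i : ℤ, ∀ n : ℕ, 1 ≤ n →
      y i n * y (i + 1) n = y i (n + 1) * y (i + 1) (n - 1) + 1) :
    ∀ i : ℤ, ∀ n : ℕ, 1 ≤ n → y i n = cheb n (fun k => x (i + k)) := by
  have main : ∀ n : ℕ, (∀ i, y i (n+1) = cheb (n+1) fun k => x (i + k)) ∧
      (∀ i, y i (n+2) = cheb (n+2) fun k => x (i + k)) := by
    intro n
    induction n with
    | zero =>
      constructor
      · intro i
        rw [hy1]
        show x i = x (i + ((0:ℕ):ℤ))
        norm_num
      · intro i
        have h := hrec i 1 le_rfl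
        rw [hy1, hy1, hy0] at h
        show y i 2 = (fun k : ℕ => x (i + k)) 1 * cheb 1 (fun k : ℕ => x (i + k)) -
          cheb 0 (fun k : ℕ => x (i + k))
        simp only [cheb, Nat.cast_one, Nat.cast_zero, add_zero]
        norm_num at h
        linear_combination -h
    | succ m ih =>
      obtain ⟨ih1, ih2⟩ := ih
      refine ⟨ih2, fun i => ?_⟩
      have h := hrec i (m+2) (by omega)
      rw [ih2 i, ih2 (i+1), show m+2-1 = m+1 from rfl, ih1 (i+1)] at h
      have key := cheb_identity (fun k : ℕ => x (i + k)) (m+1)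
      rw [cheb_shift x i (m+1), cheb_shift x i (m+2)] at key
      simp only [show m+1+1 = m+2 from rfl, show m+1+2 = m+3 from rfl,
        show m+2+1 = m+3 from rfl] at h key ⊢
      have hc : cheb (m+1) (fun k : ℕ => x ((i+1) + k)) ≠ 0 := by
        rw [← ih1 (i+1)]; exact hy (i+1) (m+1)
      exact mul_right_cancel₀ hc (by linear_combination key - h :
        y i (m+3) * cheb (m+1) (fun k : ℕ => x ((i+1) + k)) =
        cheb (m+3) (fun k : ℕ => x (i + k)) * cheb (m+1) (fun k : ℕ => x ((i+1) + k)))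
  intro i n hn
  obtain ⟨m, rfl⟩ : ∃ m, n = m + 1 := ⟨n - 1, by omega⟩
  exact (main m).1 i
end

section
/- For all integers m, n > 0 and 0 < j < n with m > n − j, the generalized Chebyshev polynomials satisfy the multiplication identity P_m(t_j, ..., t_{j+m-1}) · P_n(t_0, ..., t_{n-1}) = P_{m+j}(t_0, ..., t_{m+j-1}) · P_{n-j}(t_j, ..., t_{n-1}) + P_{j-1}(t_0, ..., t_{j-2}) · P_{m+j-n-1}(t_{n+1}, ..., t_{m+j-1}), as an identity in ℤ[t_0, ..., t_{m+j-1}]. -/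
open MvPolynomial Polynomial

section Aux

variable {R : Type*} [CommRing R] (t : ℕ → R)

/-- shifted variables -/
def chebSh (a : ℕ) : ℕ → R := fun k => t (a + k)

lemma cheb_rec (ℓ : ℕ) (u : ℕ → R) :
    cheb (ℓ + 2) u = u (ℓ + 1) * cheb (ℓ + 1) u - cheb ℓ u := rfl

lemma cheb_one (u : ℕ → R) : cheb 1 u = u 0 := rfl
lemma cheb_zero (u : ℕ → R) : cheb 0 u = 1 := rfl

lemma chebSh_apply (a k : ℕ) : chebSh t a k = t (a + k) := rfl

/-- Euler identity for continuants. -/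
lemma cheb_euler : ∀ q p a : ℕ,
    cheb (p + 1 + (q + 1)) (chebSh t a) =
      cheb (p + 1) (chebSh t a) * cheb (q + 1) (chebSh t (a + p + 1)) -
        cheb p (chebSh t a) * cheb q (chebSh t (a + p + 2)) := by
  intro q
  induction q using Nat.twoStepInduction with
  | zero =>
    intro p a
    rw [show p + 1 + (0 + 1) = p + 2 from by omega, cheb_rec, cheb_one, cheb_zero,
      chebSh_apply, chebSh_apply, show a + (p + 1) = a + p + 1 from by omega,
      show a + p + 1 + 0 = a + p + 1 from by omega]
    ring
  | one =>
    intro p a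
    rw [show p + 1 + (1 + 1) = (p + 1) + 2 from by omega, cheb_rec, cheb_rec,
      show (2 : ℕ) = 0 + 2 from rfl, cheb_rec]
    simp only [cheb_one, cheb_zero, chebSh_apply, Nat.zero_add, Nat.add_zero]
    rw [show a + (p + 1 + 1) = a + p + 2 from by omega,
      show a + (p + 1) = a + p + 1 from by omega,
      show a + p + 1 + (0 + 1) = a + p + 2 from by omega,
      show a + p + 1 + 0 = a + p + 1 from by omega,
      show a + p + (0 + 2) + 0 = a + p + 2 from by omega]
    ring
  | more q ih1 ih2 =>
    intro p a
    have e1 := ih1 p a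
    have e2 := ih2 p a
    rw [show p + 1 + (q + 2 + 1) = (p + 1 + (q + 1)) + 2 from by omega, cheb_rec,
      show p + 1 + (q + 1) + 1 = p + 1 + (q + 1 + 1) from by omega, e1, e2,
      cheb_rec (q + 1) (chebSh t (a + p + 1)), cheb_rec q (chebSh t (a + p + 1)),
      cheb_rec q (chebSh t (a + p + 2))]
    simp only [chebSh_apply]
    rw [show a + (p + 1 + (q + 2)) = a + p + q + 3 from by omega,
      show a + p + 1 + (q + 1 + 1) = a + p + q + 3 from by omega,
      show a + p + 1 + (q + 1) = a + p + q + 2 from by omega,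
      show a + p + 2 + (q + 1) = a + p + q + 3 from by omega]
    ring

/-- Casoratian identity. -/
lemma cheb_casorati (a j : ℕ) : ∀ d : ℕ,
    cheb (j + 1 + d) (chebSh t a) * cheb (d + 1) (chebSh t (a + j + 1)) -
      cheb (j + 1 + d + 1) (chebSh t a) * cheb d (chebSh t (a + j + 1)) =
      cheb j (chebSh t a) := by
  intro d
  induction d with
  | zero =>
    rw [show j + 1 + 0 + 1 = j + 2 from by omega, show j + 1 + 0 = j + 1 from by omega,
      cheb_rec, cheb_one, cheb_zero, chebSh_apply, chebSh_apply,
      show a + (j + 1) = a + j + 1 from by omega,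
      show a + j + 1 + 0 = a + j + 1 from by omega]
    ring
  | succ d ih =>
    rw [show j + 1 + (d + 1) + 1 = (j + 1 + d) + 2 from by omega,
      show j + 1 + (d + 1) = (j + 1 + d) + 1 from rfl,
      show d + 1 + 1 = d + 2 from rfl, cheb_rec, cheb_rec,
      chebSh_apply, chebSh_apply,
      show a + (j + 1 + d + 1) = a + j + d + 2 from by omega,
      show a + j + 1 + (d + 1) = a + j + d + 2 from by omega]
    linear_combination ih

lemma cheb_key (j' p' q' : ℕ) :
    cheb (p' + q' + 2) (chebSh t (j' + 1)) * cheb (j' + p' + 2) (chebSh t 0) =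
      cheb (j' + p' + q' + 3) (chebSh t 0) * cheb (p' + 1) (chebSh t (j' + 1)) +
        cheb j' (chebSh t 0) * cheb q' (chebSh t (j' + p' + 3)) := by
  have E1 := cheb_euler t q' (j' + p' + 1) 0
  have E2 := cheb_euler t q' p' (j' + 1)
  have K := cheb_casorati t 0 j' p'
  rw [show j' + p' + 1 + 1 + (q' + 1) = j' + p' + q' + 3 from by omega,
    show j' + p' + 1 + 1 = j' + p' + 2 from by omega,
    show 0 + (j' + p' + 1) + 1 = j' + p' + 2 from by omega,
    show 0 + (j' + p' + 1) + 2 = j' + p' + 3 from by omega] at E1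
  rw [show p' + 1 + (q' + 1) = p' + q' + 2 from by omega,
    show j' + 1 + p' + 1 = j' + p' + 2 from by omega,
    show j' + 1 + p' + 2 = j' + p' + 3 from by omega] at E2
  rw [show j' + 1 + p' + 1 = j' + p' + 2 from by omega,
    show j' + 1 + p' = j' + p' + 1 from by omega,
    show 0 + j' + 1 = j' + 1 from by omega] at K
  linear_combination cheb (j' + p' + 2) (chebSh t 0) * E2 -
    cheb (p' + 1) (chebSh t (j' + 1)) * E1 +
    cheb q' (chebSh t (j' + p' + 3)) * K

end Aux

/-- multiplication identity for generalized Chebyshev polynomials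
(polynomial form of the multiplication theorem in wild regular components). -/
theorem cheb_multiplication (m n j : ℕ) (hm : 0 < m) (hj : 0 < j) (hjn : j < n)
    (hmnj : m > n - j) :
    cheb m (fun k => (X (j + k) : MvPolynomial ℕ ℤ)) *
        cheb n (fun k => (X k : MvPolynomial ℕ ℤ)) =
      cheb (m + j) (fun k => (X k : MvPolynomial ℕ ℤ)) *
          cheb (n - j) (fun k => (X (j + k) : MvPolynomial ℕ ℤ)) +
        cheb (j - 1) (fun k => (X k : MvPolynomial ℕ ℤ)) *
          cheb (m + j - n - 1) (fun k => (X (n + 1 + k) : MvPolynomial ℕ ℤ)) := by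
  obtain ⟨j', rfl⟩ : ∃ a, j = a + 1 := ⟨j - 1, by omega⟩
  obtain ⟨p', rfl⟩ : ∃ a, n = j' + 1 + (a + 1) := ⟨n - j' - 2, by omega⟩
  obtain ⟨q', rfl⟩ : ∃ a, m = p' + 1 + (a + 1) := ⟨m - p' - 2, by omega⟩
  have h0 : (fun k => (X k : MvPolynomial ℕ ℤ)) = chebSh X 0 := by
    funext k; simp [chebSh]
  have hj1 : (fun k => (X (j' + 1 + k) : MvPolynomial ℕ ℤ)) = chebSh X (j' + 1) := rfl
  have hn1 : (fun k => (X (j' + 1 + (p' + 1) + 1 + k) : MvPolynomial ℕ ℤ)) =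
      chebSh X (j' + p' + 3) := by
    funext k; simp only [chebSh]; congr 1; omega
  rw [h0, hj1, hn1,
    show p' + 1 + (q' + 1) = p' + q' + 2 from by omega,
    show j' + 1 + (p' + 1) = j' + p' + 2 from by omega,
    show p' + q' + 2 + (j' + 1) = j' + p' + q' + 3 from by omega,
    show j' + p' + 2 - (j' + 1) = p' + 1 from by omega,
    show j' + 1 - 1 = j' from by omega,
    show j' + p' + q' + 3 - (j' + p' + 2) - 1 = q' from by omega]
  exact cheb_key X j' p' q'
end

section
/- Let r ≥ 1 and let u_0, ..., u_{r-1} be indeterminates over ℚ. Define u_{-1} = u_r = 1 and x_i = (u_{i-1} + u_{i+1})/u_i for 0 ≤ i ≤ r−1 in the field ℚ(u_0, ..., u_{r-1}). Then P_{r+1}(x_0, x_1, ..., x_{r-1}, u_{r-1}) = 1. -/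
open MvPolynomial Polynomial

/-- The field `ℚ(u_0, ..., u_{r-1})`. -/
abbrev FF (r : ℕ) := FractionRing (MvPolynomial (Fin r) ℚ)

/-- The indeterminates `u_i` for `0 ≤ i < r`, extended by `u_i = 1` outside this range
(so that `u_{-1} = u_r = 1`). -/
noncomputable def uu (r : ℕ) (i : ℤ) : FF r :=
  if h : 0 ≤ i ∧ i < r then
    algebraMap (MvPolynomial (Fin r) ℚ) (FF r) (X (⟨i.toNat, by omega⟩ : Fin r))
  else 1

/-- The cluster characters of the simple modules: `x_i = (u_{i-1} + u_{i+1}) / u_i`. -/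
noncomputable def xx (r : ℕ) (i : ℤ) : FF r := (uu r (i - 1) + uu r (i + 1)) / uu r i

lemma uu_ne_zero (r : ℕ) (i : ℤ) (h0 : 0 ≤ i) (h1 : i < r) : uu r i ≠ 0 := by
  rw [uu, dif_pos ⟨h0, h1⟩]
  exact (map_ne_zero_iff _ (IsFractionRing.injective (MvPolynomial (Fin r) ℚ) (FF r))).mpr
    (MvPolynomial.X_ne_zero _)

lemma uu_out (r : ℕ) (i : ℤ) (h : ¬ (0 ≤ i ∧ i < r)) : uu r i = 1 := by
  rw [uu, dif_neg h]

lemma xx_mul (r : ℕ) (i : ℤ) (h0 : 0 ≤ i) (h1 : i < r) :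
    xx r i * uu r i = uu r (i - 1) + uu r (i + 1) := by
  rw [xx, div_mul_cancel₀ _ (uu_ne_zero r i h0 h1)]

lemma casoratian (r : ℕ) (hr : 1 ≤ r) :
    ∀ n : ℕ, n + 1 ≤ r →
      cheb (n + 1) (fun k => if k < r then xx r k else uu r ((r : ℤ) - 1)) * uu r n
        - cheb n (fun k => if k < r then xx r k else uu r ((r : ℤ) - 1)) * uu r ((n : ℤ) + 1) = 1 := by
  intro n
  induction n with
  | zero =>
    intro h
    have hc : cheb 1 (fun k => if k < r then xx r k else uu r ((r : ℤ) - 1))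
        = if 0 < r then xx r 0 else uu r ((r : ℤ) - 1) := by
      show (if (0 : ℕ) < r then xx r ((0 : ℕ) : ℤ) else _) = _
      norm_num
    rw [hc, if_pos (by omega : 0 < r)]
    have key : xx r 0 * uu r 0 = uu r (-1) + uu r 1 := by
      simpa using xx_mul r 0 le_rfl (by exact_mod_cast h)
    have hm : uu r (-1) = 1 := uu_out r _ (by omega)
    show xx r 0 * uu r ((0 : ℕ) : ℤ) - 1 * uu r _ = 1
    push_cast
    linear_combination key + hm
  | succ n ih =>
    intro h
    have ih' := ih (by omega)
    have key : xx r ((n : ℤ) + 1) * uu r ((n : ℤ) + 1) = uu r n + uu r ((n : ℤ) + 2) := by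
      have := xx_mul r ((n : ℤ) + 1) (by omega) (by exact_mod_cast h)
      rw [add_sub_cancel_right, show ((n : ℤ) + 1) + 1 = (n : ℤ) + 2 by ring] at this
      exact this
    have hc : ∀ f : ℕ → FF r, cheb (n + 2) f = f (n + 1) * cheb (n + 1) f - cheb n f :=
      fun f => rfl
    rw [show n + 1 + 1 = n + 2 from rfl, hc]
    simp only [if_pos (show n + 1 < r by omega)]
    have hcast1 : ((n + 1 : ℕ) : ℤ) = (n : ℤ) + 1 := by push_cast; ring
    rw [hcast1]
    have hcast2 : ((n : ℤ) + 1) + 1 = (n : ℤ) + 2 := by ring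
    rw [hcast2]
    linear_combination cheb (n + 1) (fun k => if k < r then xx r k else uu r ((r : ℤ) - 1)) * key
      + ih'

/-- `P_{r+1}(x_0, ..., x_{r-1}, u_{r-1}) = 1`. -/
theorem cheb_eval_simples_eq_one (r : ℕ) (hr : 1 ≤ r) :
    cheb (r + 1) (fun k => if k < r then xx r k else uu r ((r : ℤ) - 1)) = 1 := by
  obtain ⟨m, rfl⟩ : ∃ m, r = m + 1 := ⟨r - 1, by omega⟩
  have cas := casoratian (m + 1) (by omega) m (by omega)
  have hu : uu (m + 1) ((m : ℤ) + 1) = 1 := uu_out _ _ (by omega)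
  rw [hu] at cas
  have hc : ∀ f : ℕ → FF (m + 1), cheb (m + 2) f = f (m + 1) * cheb (m + 1) f - cheb m f :=
    fun f => rfl
  rw [show m + 1 + 1 = m + 2 from rfl, hc]
  simp only [if_neg (show ¬ m + 1 < m + 1 by omega)]
  have hcast : ((m + 1 : ℕ) : ℤ) - 1 = (m : ℤ) := by push_cast; ring
  rw [hcast] at cas ⊢
  linear_combination cas
end

section
/- Let r ≥ 1 and let u_0, ..., u_{r-1} be indeterminates over ℚ, with u_{-1} = u_r = 1 and x_i = (u_{i-1} + u_{i+1})/u_i for 0 ≤ i ≤ r−1. Then the elements x_0, ..., x_{r-1} are algebraically independent over ℚ; equivalently, {x_0, ..., x_{r-1}} is a transcendence basis of ℚ(u_0, ..., u_{r-1}) over ℚ. -/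
open MvPolynomial Polynomial

set_option maxHeartbeats 1000000
set_option synthInstance.maxHeartbeats 200000

section ChebAux

variable {R S : Type*} [CommRing R] [CommRing S]

lemma cheb_add_two (n : ℕ) (t : ℕ → R) :
    cheb (n + 2) t = t (n + 1) * cheb (n + 1) t - cheb n t := rfl

lemma cheb_congr : ∀ (n : ℕ) (t t' : ℕ → R), (∀ k, k < n → t k = t' k) → cheb n t = cheb n t'
  | 0, _, _, _ => rfl
  | 1, t, t', h => h 0 one_pos
  | (n + 2), t, t', h => by
      rw [cheb_add_two, cheb_add_two, h (n + 1) (by omega),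
        cheb_congr (n + 1) t t' (fun k hk => h k (by omega)),
        cheb_congr n t t' (fun k hk => h k (by omega))]

lemma cheb_map {F : Type*} [FunLike F R S] [RingHomClass F R S] (f : F) : ∀ (n : ℕ) (t : ℕ → R),
    f (cheb n t) = cheb n (fun k => f (t k))
  | 0, _ => by simp [cheb]
  | 1, t => rfl
  | (n + 2), t => by
      rw [cheb_add_two, map_sub, map_mul, cheb_map f (n + 1), cheb_map f n, cheb_add_two]

lemma cheb_mem {R A : Type*} [CommRing R] [CommRing A] [Algebra R A] (S : Subalgebra R A) :
    ∀ (n : ℕ) (t : ℕ → A), (∀ k, t k ∈ S) → cheb n t ∈ S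
  | 0, _, _ => one_mem S
  | 1, t, ht => ht 0
  | (n + 2), t, ht => by
      rw [cheb_add_two]
      exact sub_mem (mul_mem (ht (n + 1)) (cheb_mem S (n + 1) t ht)) (cheb_mem S n t ht)

lemma cheb_const_two : ∀ n : ℕ, cheb n (fun _ => (2 : ℚ)) = n + 1
  | 0 => by norm_num [cheb]
  | 1 => by norm_num [cheb]
  | (n + 2) => by
      rw [cheb_add_two, cheb_const_two (n + 1), cheb_const_two n]
      push_cast; ring

end ChebAux

noncomputable section Defs

abbrev PolyA (r : ℕ) := MvPolynomial (Fin r) ℚ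

def TT (r k : ℕ) : PolyA r := if h : k < r then X ⟨k, h⟩ else 1

def dP (r : ℕ) : ℕ → PolyA r
  | 0 => 0
  | (m + 1) => cheb m (fun k => TT r (k + 1))

def Np (r n : ℕ) : PolyA r :=
  cheb n (TT r) * (1 + cheb (r - 1) (fun k => TT r (k + 1))) - dP r n * cheb r (TT r)

def jj (r : ℕ) : PolyA r →+* FF r := algebraMap _ _

def vv (r n : ℕ) : FF r := jj r (Np r n) / jj r (cheb r (TT r))

lemma jj_inj (r : ℕ) : Function.Injective (jj r) := IsFractionRing.injective _ _

lemma eval_TT (r k : ℕ) :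
    eval (fun _ : Fin r => (2 : ℚ)) (TT r k) = if k < r then 2 else 1 := by
  unfold TT; split <;> simp

lemma eval_cheb_TT (r n : ℕ) (hn : n ≤ r) :
    eval (fun _ : Fin r => (2 : ℚ)) (cheb n (TT r)) = n + 1 := by
  rw [cheb_map (MvPolynomial.eval (fun _ : Fin r => (2 : ℚ))) n (TT r)]
  rw [cheb_congr n _ (fun _ => (2 : ℚ)) (fun k hk => by rw [eval_TT, if_pos (by omega)])]
  exact cheb_const_two n

lemma eval_cheb_TTs (r n : ℕ) (hn : n + 1 ≤ r) :
    eval (fun _ : Fin r => (2 : ℚ)) (cheb n (fun k => TT r (k + 1))) = n + 1 := by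
  rw [cheb_map (MvPolynomial.eval (fun _ : Fin r => (2 : ℚ))) n]
  rw [cheb_congr n _ (fun _ => (2 : ℚ)) (fun k hk => by rw [eval_TT, if_pos (by omega)])]
  exact cheb_const_two n

lemma chebTT_ne (r : ℕ) : cheb r (TT r) ≠ 0 := by
  intro h0
  have h2 := eval_cheb_TT r r le_rfl
  rw [h0] at h2
  simp at h2
  have : (0:ℚ) ≤ r := by positivity
  linarith

lemma D_ne (r : ℕ) : jj r (cheb r (TT r)) ≠ 0 := fun h =>
  chebTT_ne r (jj_inj r (by simpa using h))

lemma eval_Np (r : ℕ) (hr : 1 ≤ r) (n : ℕ) (hn : n ≤ r) :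
    eval (fun _ : Fin r => (2 : ℚ)) (Np r n) = r + 1 := by
  have hC : eval (fun _ : Fin r => (2 : ℚ)) (cheb (r - 1) (fun k => TT r (k + 1)))
      = (r : ℚ) := by
    rw [eval_cheb_TTs r (r - 1) (by omega)]
    have h1 : r - 1 + 1 = r := by omega
    have : ((r - 1 : ℕ) : ℚ) + 1 = (r : ℚ) := by exact_mod_cast congrArg (Nat.cast : ℕ → ℚ) h1
    linarith
  have hdP : eval (fun _ : Fin r => (2 : ℚ)) (dP r n) = n := by
    cases n with
    | zero => simp [dP]
    | succ m =>
        rw [show dP r (m+1) = cheb m (fun k => TT r (k + 1)) from rfl,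
          eval_cheb_TTs r m (by omega)]
        push_cast; ring
  unfold Np
  rw [map_sub, map_mul, map_mul, map_add, map_one, eval_cheb_TT r n hn, hC, hdP,
    eval_cheb_TT r r le_rfl]
  ring

lemma Np_ne (r : ℕ) (hr : 1 ≤ r) (n : ℕ) (hn : n ≤ r) : jj r (Np r n) ≠ 0 := by
  intro h
  have h0 : Np r n = 0 := jj_inj r (by simpa using h)
  have h2 := eval_Np r hr n hn
  rw [h0] at h2
  simp at h2
  have : (0:ℚ) ≤ r := by positivity
  linarith

lemma vv_ne (r : ℕ) (hr : 1 ≤ r) (n : ℕ) (hn : n ≤ r) : vv r n ≠ 0 :=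
  div_ne_zero (Np_ne r hr n hn) (D_ne r)

lemma Np_top (r : ℕ) (hr : 1 ≤ r) : Np r r = cheb r (TT r) := by
  obtain ⟨m, rfl⟩ : ∃ m, r = m + 1 := ⟨r - 1, by omega⟩
  show cheb (m+1) (TT (m+1)) * (1 + cheb (m + 1 - 1) (fun k => TT (m+1) (k + 1)))
      - dP (m+1) (m+1) * cheb (m+1) (TT (m+1)) = _
  rw [show m + 1 - 1 = m from rfl, show dP (m+1) (m+1) = cheb m (fun k => TT (m+1) (k + 1)) from rfl]
  ring

lemma vv_top (r : ℕ) (hr : 1 ≤ r) : vv r r = 1 := by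
  unfold vv; rw [Np_top r hr]; exact div_self (D_ne r)

lemma dP_succ (r m : ℕ) : dP r (m + 1) = cheb m (fun k => TT r (k + 1)) := rfl

lemma dP_zero (r : ℕ) : dP r 0 = 0 := rfl

lemma dP_rec (r m : ℕ) : dP r (m + 2) = TT r (m + 1) * dP r (m + 1) - dP r m := by
  cases m with
  | zero =>
      rw [dP_succ, dP_succ, dP_zero]
      show cheb 1 _ = TT r 1 * cheb 0 _ - 0
      simp [cheb]
  | succ l =>
      rw [dP_succ, dP_succ, dP_succ, cheb_add_two]

lemma Np_rec (r m : ℕ) : Np r m + Np r (m + 2) = TT r (m + 1) * Np r (m + 1) := by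
  unfold Np
  rw [cheb_add_two, dP_rec]
  ring

lemma Np_zero_id (r : ℕ) : cheb r (TT r) + Np r 1 = TT r 0 * Np r 0 := by
  unfold Np
  rw [dP_succ, dP_zero, show cheb 1 (TT r) = TT r 0 from rfl,
    show cheb 0 (TT r) = 1 from rfl, show cheb 0 (fun k => TT r (k + 1)) = 1 from rfl]
  ring

lemma vv_key (r : ℕ) (k : ℕ) :
    (if k = 0 then 1 else vv r (k - 1)) + vv r (k + 1) = jj r (TT r k) * vv r k := by
  have hD := D_ne r
  cases k with
  | zero =>
      rw [if_pos rfl]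
      unfold vv
      rw [show (1 : FF r) = jj r (cheb r (TT r)) / jj r (cheb r (TT r)) from (div_self hD).symm,
        ← add_div, ← mul_div_assoc, ← map_add, ← map_mul, Np_zero_id]
  | succ m =>
      rw [if_neg (Nat.succ_ne_zero m), Nat.succ_sub_one]
      unfold vv
      rw [← add_div, ← mul_div_assoc, ← map_add, ← map_mul, Np_rec]

end Defs

noncomputable section Part1

lemma jj_TT_lt (r k : ℕ) (h : k < r) : jj r (TT r k) = jj r (X ⟨k, h⟩) := by
  unfold TT; rw [dif_pos h]

lemma uu_eq (r k : ℕ) : uu r (k : ℤ) = jj r (TT r k) := by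
  by_cases h : k < r
  · unfold uu TT
    rw [dif_pos ⟨Int.natCast_nonneg k, by exact_mod_cast h⟩, dif_pos h]
    show jj r _ = jj r _
    norm_num
  · unfold uu TT
    rw [dif_neg (by omega), dif_neg h, map_one]

lemma uu_negone (r : ℕ) : uu r (-1) = 1 := by
  unfold uu; rw [dif_neg (by omega)]

lemma uu_fin (r : ℕ) (i : Fin r) : uu r (i : ℤ) = jj r (X i) := by
  have h1 : ((i : ℤ)) = ((i.val : ℕ) : ℤ) := rfl
  rw [h1, uu_eq, jj_TT_lt r i.val i.isLt]

lemma uu_fin_ne (r : ℕ) (i : Fin r) : uu r (i : ℤ) ≠ 0 := by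
  rw [uu_fin]
  exact fun h => MvPolynomial.X_ne_zero i (jj_inj r (by simpa using h))

def NumP (r : ℕ) (i : Fin r) : PolyA r :=
  (if i.val = 0 then 1 else TT r (i.val - 1)) + TT r (i.val + 1)

lemma xx_mul_s9 (r : ℕ) (i : Fin r) : xx r i * jj r (X i) = jj r (NumP r i) := by
  unfold xx
  rw [← uu_fin r i, div_mul_cancel₀ _ (uu_fin_ne r i)]
  unfold NumP
  rw [map_add]
  congr 1
  · by_cases h0 : i.val = 0
    · rw [if_pos h0, map_one, show (i : ℤ) - 1 = -1 by omega, uu_negone]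
    · rw [if_neg h0, show (i : ℤ) - 1 = ((i.val - 1 : ℕ) : ℤ) by omega, uu_eq]
  · rw [show (i : ℤ) + 1 = ((i.val + 1 : ℕ) : ℤ) by omega, uu_eq]

theorem part1 (r : ℕ) (hr : 1 ≤ r) :
    AlgebraicIndependent ℚ (fun i : Fin r => xx r i) := by
  classical
  rw [algebraicIndependent_iff]
  intro p hp
  set c : PolyA r := ∏ i, X i with hc_def
  have hc : c ≠ 0 := Finset.prod_ne_zero_iff.2 fun i _ => MvPolynomial.X_ne_zero i
  set B := Localization (Submonoid.powers c) with hB_def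
  have hjc : ∀ y : (Submonoid.powers c), IsUnit (jj r y) := by
    rintro ⟨y, n, rfl⟩
    rw [map_pow]
    exact IsUnit.pow n (isUnit_iff_ne_zero.2 fun h0 => hc (jj_inj r (by simpa using h0)))
  set g : B →+* FF r := IsLocalization.lift (S := B) hjc with hg_def
  have hg_alg : ∀ a, g (algebraMap (PolyA r) B a) = jj r a := fun a =>
    IsLocalization.lift_eq hjc a
  have halgB_inj : Function.Injective (algebraMap (PolyA r) B) :=
    IsLocalization.injective B (powers_le_nonZeroDivisors_of_noZeroDivisors hc)
  have hg_inj : Function.Injective g := by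
    rw [IsLocalization.lift_injective_iff]
    intro a b
    constructor
    · intro h; exact congrArg (jj r) (halgB_inj h)
    · intro h; exact congrArg (algebraMap (PolyA r) B) (jj_inj r h)
  have hXu : ∀ i : Fin r, IsUnit (algebraMap (PolyA r) B (X i)) := by
    intro i
    have h1 : IsUnit (algebraMap (PolyA r) B c) :=
      IsLocalization.map_units B ⟨c, Submonoid.mem_powers c⟩
    have hsplit : c = X i * ∏ j ∈ Finset.univ.erase i, X j := by
      rw [hc_def, ← Finset.mul_prod_erase _ _ (Finset.mem_univ i)]
    rw [congrArg (algebraMap (PolyA r) B) hsplit, map_mul] at h1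
    exact isUnit_of_mul_isUnit_left h1
  set x' : Fin r → B :=
    fun i => (((hXu i).unit⁻¹ : Bˣ) : B) * algebraMap _ B (NumP r i) with hx'_def
  have hx'X : ∀ i, x' i * algebraMap (PolyA r) B (X i) = algebraMap _ B (NumP r i) := by
    intro i
    have h2 : (((hXu i).unit⁻¹ : Bˣ) : B) * algebraMap (PolyA r) B (X i) = 1 :=
      (hXu i).val_inv_mul
    rw [hx'_def]
    calc (((hXu i).unit⁻¹ : Bˣ) : B) * algebraMap _ B (NumP r i) * algebraMap (PolyA r) B (X i)
        = ((((hXu i).unit⁻¹ : Bˣ) : B) * algebraMap (PolyA r) B (X i))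
            * algebraMap _ B (NumP r i) := by ring
      _ = algebraMap _ B (NumP r i) := by rw [h2, one_mul]
  set ρ : ℚ →+* B := (algebraMap (PolyA r) B).comp (algebraMap ℚ (PolyA r)) with hρ_def
  -- step 1 : g kills eval₂ ρ x' p
  have hgx : ∀ i, g (x' i) = xx r i := by
    intro i
    have h1 : g (x' i) * jj r (X i) = jj r (NumP r i) := by
      rw [← hg_alg (X i), ← map_mul, hx'X i, hg_alg]
    have h2 := xx_mul_s9 r i
    have hXne : jj r (X i) ≠ 0 := by
      rw [← uu_fin]; exact uu_fin_ne r i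
    exact mul_right_cancel₀ hXne (h1.trans h2.symm)
  have step2 : eval₂ ρ x' p = 0 := by
    apply hg_inj
    rw [map_zero, eval₂_comp_left g ρ x' p,
      RingHom.ext_rat (g.comp ρ) (algebraMap ℚ (FF r)),
      show (g ∘ x') = fun i : Fin r => xx r i from funext hgx, ← MvPolynomial.aeval_def, hp]
  -- ψ side
  set V : Fin r → FF r := fun i => vv r i.val with hV_def
  set ψ : PolyA r →+* FF r := ((aeval V : PolyA r →ₐ[ℚ] FF r) : PolyA r →+* FF r) with hψ_def
  have hψX : ∀ i : Fin r, ψ (X i) = vv r i.val := by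
    intro i; rw [hψ_def]; simp [hV_def]
  have hψTT : ∀ k, k ≤ r → ψ (TT r k) = vv r k := by
    intro k hk
    unfold TT
    split
    · next h => rw [hψX ⟨k, h⟩]
    · next h =>
        rw [map_one, show k = r by omega, vv_top r hr]
  have hψc : ∀ y : (Submonoid.powers c), IsUnit (ψ y) := by
    rintro ⟨y, n, rfl⟩
    rw [map_pow]
    refine IsUnit.pow n (isUnit_iff_ne_zero.2 ?_)
    rw [hc_def, map_prod]
    refine Finset.prod_ne_zero_iff.2 fun i _ => ?_
    rw [hψX i]
    exact vv_ne r hr i.val (le_of_lt i.isLt)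
  set h' : B →+* FF r := IsLocalization.lift (S := B) hψc with hh_def
  have hh_alg : ∀ a, h' (algebraMap (PolyA r) B a) = ψ a := fun a =>
    IsLocalization.lift_eq hψc a
  have hhx' : ∀ i : Fin r, h' (x' i) = jj r (X i) := by
    intro i
    have h1 : h' (x' i) * vv r i.val = ψ (NumP r i) := by
      rw [← hψX i, ← hh_alg (X i), ← map_mul, hx'X i, hh_alg]
    have h2 : ψ (NumP r i) = jj r (TT r i.val) * vv r i.val := by
      unfold NumP
      rw [map_add]
      have ha : ψ (if i.val = 0 then 1 else TT r (i.val - 1)) =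
          (if i.val = 0 then 1 else vv r (i.val - 1)) := by
        split
        · exact map_one ψ
        · exact hψTT _ (by omega)
      rw [ha, hψTT (i.val + 1) i.isLt]
      exact vv_key r i.val
    have h3 : jj r (TT r i.val) = jj r (X i) := by
      rw [jj_TT_lt r i.val i.isLt]
    exact mul_right_cancel₀ (vv_ne r hr i.val (le_of_lt i.isLt))
      (h1.trans (by rw [h2, h3]))
  have step3 : eval₂ (algebraMap ℚ (FF r)) (fun i : Fin r => jj r (X i)) p = 0 := by
    have hstep := congrArg h' step2
    rw [map_zero, eval₂_comp_left h' ρ x' p,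
      RingHom.ext_rat (h'.comp ρ) (algebraMap ℚ (FF r)),
      show (h' ∘ x') = fun i : Fin r => jj r (X i) from funext hhx'] at hstep
    exact hstep
  have hfinal : jj r p = 0 := by
    have hE : jj r p = eval₂ (algebraMap ℚ (FF r)) (fun i : Fin r => jj r (X i)) p := by
      conv_lhs => rw [← MvPolynomial.eval₂_eta p]
      rw [eval₂_comp_left (jj r) C X p,
        RingHom.ext_rat ((jj r).comp C) (algebraMap ℚ (FF r))]
      rfl
    rw [hE, step3]
  exact jj_inj r (by rw [hfinal, map_zero])

end Part1

noncomputable section Part2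

open Set

def ysF (r : ℕ) (k : ℕ) : FF r := if k < r then xx r k else 1

def ddF (r : ℕ) : ℕ → FF r
  | 0 => 0
  | (m + 1) => cheb m (fun j => ysF r (j + 1))

lemma ddF_zero (r : ℕ) : ddF r 0 = 0 := rfl
lemma ddF_succ (r m : ℕ) : ddF r (m + 1) = cheb m (fun j => ysF r (j + 1)) := rfl

lemma ddF_rec (r m : ℕ) : ddF r (m + 2) = ysF r (m + 1) * ddF r (m + 1) - ddF r m := by
  cases m with
  | zero =>
      rw [ddF_succ, ddF_succ, ddF_zero]
      show cheb 1 _ = ysF r 1 * cheb 0 _ - 0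
      simp [cheb]
  | succ l =>
      rw [ddF_succ, ddF_succ, ddF_succ, cheb_add_two]

lemma uu_top (r : ℕ) : uu r (r : ℤ) = 1 := by
  rw [uu_eq]
  unfold TT
  rw [dif_neg (lt_irrefl r), map_one]

theorem part2 (r : ℕ) (hr : 1 ≤ r) :
    IsTranscendenceBasis ℚ (fun i : Fin r => xx r i) := by
  classical
  have h1 := part1 r hr
  set xf : Fin r → FF r := fun i : Fin r => xx r i with hxf_def
  set R₀ := Algebra.adjoin ℚ (Set.range xf) with hR₀_def
  have hinj : Function.Injective (MvPolynomial.aeval (R := ℚ) xf) :=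
    algebraicIndependent_iff_injective_aeval.1 h1
  -- membership lemmas
  have hys_mem : ∀ k, ysF r k ∈ R₀ := by
    intro k
    unfold ysF
    split
    · next h => exact Algebra.subset_adjoin ⟨⟨k, h⟩, rfl⟩
    · exact one_mem _
  have hcheb_mem : ∀ (n : ℕ) (t : ℕ → FF r), (∀ k, t k ∈ R₀) → cheb n t ∈ R₀ :=
    fun n t ht => cheb_mem R₀ n t ht
  have hdd_mem : ∀ n, ddF r n ∈ R₀ := by
    intro n
    cases n with
    | zero => rw [ddF_zero]; exact zero_mem _
    | succ m => rw [ddF_succ]; exact hcheb_mem m _ (fun k => hys_mem (k + 1))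
  -- recursion for uu
  have key2 : ∀ k : ℕ, k < r →
      uu r ((k : ℤ) + 1) = ysF r k * uu r (k : ℤ) - uu r ((k : ℤ) - 1) := by
    intro k hk
    have hne : uu r (k : ℤ) ≠ 0 := by
      have := uu_fin_ne r ⟨k, hk⟩
      simpa using this
    have hx : xx r k * uu r (k : ℤ) = uu r ((k : ℤ) - 1) + uu r ((k : ℤ) + 1) := by
      unfold xx
      rw [div_mul_cancel₀ _ hne]
    have hys : ysF r k = xx r k := if_pos hk
    rw [hys]
    linear_combination -hx
  have uDef : ∀ n, n ≤ r → uu r (n : ℤ) = cheb n (ysF r) * uu r 0 - ddF r n := by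
    intro n
    induction n using Nat.strong_induction_on with
    | _ n ih =>
      match n, ih with
      | 0, _ =>
          intro _
          show uu r 0 = 1 * uu r 0 - 0
          ring
      | 1, _ =>
          intro _
          have h0 := key2 0 (by omega)
          norm_num at h0
          rw [uu_negone] at h0
          show uu r 1 = cheb 1 (ysF r) * uu r 0 - ddF r 1
          rw [show cheb 1 (ysF r) = ysF r 0 from rfl, ddF_succ,
            show cheb 0 (fun j => ysF r (j + 1)) = 1 from rfl]
          exact_mod_cast h0
      | (m + 2), ih =>
          intro hn
          have hk := key2 (m + 1) (by omega)
          have e1 := ih (m + 1) (by omega) (by omega)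
          have e2 := ih m (by omega) (by omega)
          have hcast1 : ((m + 1 : ℕ) : ℤ) + 1 = ((m + 2 : ℕ) : ℤ) := by push_cast; ring
          have hcast2 : ((m + 1 : ℕ) : ℤ) - 1 = ((m : ℕ) : ℤ) := by push_cast; ring
          rw [hcast1, hcast2] at hk
          rw [cheb_add_two, ddF_rec, hk, e1, e2]
          ring
  -- cheb r ys ≠ 0
  have hch : cheb r (ysF r) ≠ 0 := by
    have e1 : (MvPolynomial.aeval (R := ℚ) xf) (cheb r (TT r)) = cheb r (ysF r) := by
      rw [cheb_map (MvPolynomial.aeval xf : PolyA r →ₐ[ℚ] FF r) r (TT r)]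
      refine cheb_congr r _ _ (fun k hk => ?_)
      unfold TT ysF
      rw [dif_pos hk, if_pos hk]
      simp
      rfl
    intro h0
    exact chebTT_ne r (hinj (by rw [e1, h0, map_zero]))
  -- u0 as a ratio
  have hu_top : (1 : FF r) = cheb r (ysF r) * uu r 0 - ddF r r := by
    rw [← uu_top r]; exact uDef r le_rfl
  have hu0 : uu r 0 = (1 + ddF r r) / cheb r (ysF r) := by
    rw [eq_div_iff hch]
    linear_combination -hu_top
  -- every uu (n) is a ratio of elements of R₀
  have hun : ∀ n : ℕ, ∃ b c : FF r, b ∈ R₀ ∧ c ∈ R₀ ∧ c ≠ 0 ∧ uu r (n : ℤ) = b / c := by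
    intro n
    by_cases hn : n ≤ r
    · refine ⟨cheb n (ysF r) * (1 + ddF r r) - ddF r n * cheb r (ysF r), cheb r (ysF r),
        ?_, ?_, hch, ?_⟩
      · exact sub_mem (mul_mem (hcheb_mem n _ hys_mem)
          (add_mem (one_mem _) (hdd_mem r))) (mul_mem (hdd_mem n) (hcheb_mem r _ hys_mem))
      · exact hcheb_mem r _ hys_mem
      · rw [uDef n hn, hu0]
        field_simp
    · refine ⟨1, 1, one_mem _, one_mem _, one_ne_zero, ?_⟩
      rw [div_one]
      unfold uu
      rw [dif_neg (by omega)]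
  -- every element of FF r is a ratio of elements of R₀
  have hpoly : ∀ p : PolyA r, ∃ b c : FF r, b ∈ R₀ ∧ c ∈ R₀ ∧ c ≠ 0 ∧ jj r p = b / c := by
    intro p
    induction p using MvPolynomial.induction_on with
    | C q =>
        refine ⟨algebraMap ℚ (FF r) q, 1, Subalgebra.algebraMap_mem R₀ q, one_mem _,
          one_ne_zero, ?_⟩
        rw [div_one]
        exact RingHom.congr_fun
          (RingHom.ext_rat ((jj r).comp (C : ℚ →+* PolyA r)) (algebraMap ℚ (FF r))) q
    | add p q hp hq =>
        obtain ⟨b1, c1, hb1, hc1, hc1ne, he1⟩ := hp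
        obtain ⟨b2, c2, hb2, hc2, hc2ne, he2⟩ := hq
        refine ⟨b1 * c2 + b2 * c1, c1 * c2, add_mem (mul_mem hb1 hc2) (mul_mem hb2 hc1),
          mul_mem hc1 hc2, mul_ne_zero hc1ne hc2ne, ?_⟩
        rw [map_add, he1, he2, div_add_div _ _ hc1ne hc2ne]
        ring_nf
    | mul_X p i hp =>
        obtain ⟨b1, c1, hb1, hc1, hc1ne, he1⟩ := hp
        obtain ⟨b2, c2, hb2, hc2, hc2ne, he2⟩ := hun i.val
        refine ⟨b1 * b2, c1 * c2, mul_mem hb1 hb2, mul_mem hc1 hc2,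
          mul_ne_zero hc1ne hc2ne, ?_⟩
        rw [map_mul, he1, ← uu_fin r i, he2]
        rw [div_mul_div_comm]
  have hratio : ∀ a : FF r, ∃ b c : FF r, b ∈ R₀ ∧ c ∈ R₀ ∧ c ≠ 0 ∧ a = b / c := by
    intro a
    obtain ⟨pn, pd, hd, heq⟩ := IsFractionRing.div_surjective (A := PolyA r) a
    obtain ⟨b1, c1, hb1, hc1, hc1ne, he1⟩ := hpoly pn
    obtain ⟨b2, c2, hb2, hc2, hc2ne, he2⟩ := hpoly pd
    have hdne : jj r pd ≠ 0 := fun h =>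
      nonZeroDivisors.ne_zero hd (jj_inj r (by simpa using h))
    have hb2ne : b2 ≠ 0 := by
      intro h
      rw [he2, h, zero_div] at hdne
      exact hdne rfl
    refine ⟨b1 * c2, c1 * b2, mul_mem hb1 hc2, mul_mem hc1 hb2,
      mul_ne_zero hc1ne hb2ne, ?_⟩
    rw [← heq]
    show jj r pn / jj r pd = _
    rw [he1, he2]
    field_simp
  -- every element is algebraic over R₀
  have halg : ∀ a : FF r, IsAlgebraic R₀ a := by
    intro a
    obtain ⟨b, c, hb, hc, hcne, rfl⟩ := hratio a
    refine ⟨Polynomial.C (⟨c, hc⟩ : R₀) * Polynomial.X - Polynomial.C (⟨b, hb⟩ : R₀), ?_, ?_⟩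
    · intro h0
      apply hcne
      have h3 := congrArg (fun q => ((Polynomial.coeff q 1 : R₀) : FF r)) h0
      simpa using h3
    · rw [map_sub, map_mul, Polynomial.aeval_X, Polynomial.aeval_C, Polynomial.aeval_C]
      show c * (b / c) - b = 0
      field_simp
      ring
  -- conclude
  refine ⟨h1, fun s hs hsub => ?_⟩
  by_contra hne
  obtain ⟨a, has, ha⟩ : ∃ a ∈ s, a ∉ Set.range xf := by
    rcases Set.exists_of_ssubset ⟨hsub, fun habs => hne (le_antisymm hsub habs)⟩ with ⟨a, h1', h2'⟩
    exact ⟨a, h1', h2'⟩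
  let e : Option (Fin r) → s := fun o => o.elim ⟨a, has⟩ (fun i => ⟨xf i, hsub ⟨i, rfl⟩⟩)
  have he : Function.Injective e := by
    rintro (_ | i) (_ | j) h
    · rfl
    · exact absurd (congrArg Subtype.val h) (fun hh => ha ⟨j, hh.symm⟩)
    · exact absurd (congrArg Subtype.val h) (fun hh => ha ⟨i, hh⟩)
    · exact congrArg Option.some (h1.injective (congrArg Subtype.val h))
  have hopt : AlgebraicIndependent ℚ (fun o : Option (Fin r) => o.elim a xf) := by
    have hcomp := hs.comp e he
    have : (Subtype.val ∘ e) = fun o : Option (Fin r) => o.elim a xf := by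
      funext o; cases o <;> rfl
    rwa [show ((fun i : s => id (i : FF r)) ∘ e) = Subtype.val ∘ e from rfl, this] at hcomp
  exact (h1.option_iff_transcendental a).1 hopt (halg a)

end Part2

/-- the elements `x_0, ..., x_{r-1}` are algebraically independent over `ℚ`,
and form a transcendence basis of `ℚ(u_0, ..., u_{r-1})` over `ℚ`. -/
theorem xx_algebraicIndependent (r : ℕ) (hr : 1 ≤ r) :
    AlgebraicIndependent ℚ (fun i : Fin r => xx r i) ∧
      IsTranscendenceBasis ℚ (fun i : Fin r => xx r i) :=
  ⟨part1 r hr, part2 r hr⟩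
end

section
/- The ring ℤ[t_0, ..., t_r]/(P_{r+1}(t_0, ..., t_r) − 1) is isomorphic as a ℤ-algebra to the subring of ℚ(u_0, ..., u_{r-1}) generated by u_0, ..., u_{r-1} and x_0, ..., x_{r-1}, where x_i = (u_{i-1} + u_{i+1})/u_i with u_{-1} = u_r = 1. -/
open MvPolynomial Polynomial

set_option maxHeartbeats 1000000
set_option synthInstance.maxHeartbeats 400000

namespace ClusterAux

lemma cheb_hom {F R S : Type*} [CommRing R] [CommRing S] [FunLike F R S] [RingHomClass F R S] (f : F) :
    ∀ (n : ℕ) (t : ℕ → R), f (cheb n t) = cheb n (fun i => f (t i))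
  | 0, _ => by simp [cheb]
  | 1, _ => by simp [cheb]
  | (n+2), t => by
      simp only [cheb, map_sub, map_mul, cheb_hom f (n+1) t, cheb_hom f n t]

lemma cheb_congr {R : Type*} [CommRing R] :
    ∀ (n : ℕ) (t t' : ℕ → R), (∀ i < n, t i = t' i) → cheb n t = cheb n t'
  | 0, _, _, _ => rfl
  | 1, t, t', h => by simp [cheb, h 0 one_pos]
  | (n+2), t, t', h => by
      simp only [cheb]
      rw [h (n+1) (by omega), cheb_congr (n+1) t t' (fun i hi => h i (by omega)),
        cheb_congr n t t' (fun i hi => h i (by omega))]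

def chebm {R : Type*} [CommRing R] : ℕ → (ℕ → R) → R
  | 0, _ => 0
  | (n+1), t => cheb n (fun i => t (i+2))

lemma chebm_rec {R : Type*} [CommRing R] :
    ∀ (n : ℕ) (t : ℕ → R), chebm (n+2) t = t (n+2) * chebm (n+1) t - chebm n t
  | 0, t => by simp [chebm, cheb]
  | (k+1), t => by simp only [chebm, cheb]

lemma cheb_peel {R : Type*} [CommRing R] :
    ∀ (n : ℕ) (t : ℕ → R), cheb (n+1) t = t 0 * cheb n (fun i => t (i+1)) - chebm n t
  | 0, t => by simp [cheb, chebm]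
  | 1, t => by simp [cheb, chebm]; ring
  | (n+2), t => by
      have h1 := cheb_peel (n+1) t
      have h0 := cheb_peel n t
      have hm := chebm_rec n t
      have e1 : cheb (n+2+1) t = t (n+2) * cheb (n+2) t - cheb (n+1) t := rfl
      have e2 : cheb (n+2) (fun i => t (i+1)) =
          t (n+2) * cheb (n+1) (fun i => t (i+1)) - cheb n (fun i => t (i+1)) := rfl
      rw [e1, e2, h1, h0, hm]
      ring

lemma cheb_two : ∀ n : ℕ, cheb n (fun _ => (2:ℤ)) = n+1
  | 0 => by simp [cheb]
  | 1 => by simp [cheb]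
  | (n+2) => by
      have h1 := cheb_two (n+1)
      have h0 := cheb_two n
      simp only [cheb, h1, h0]
      push_cast
      ring

lemma uu_ne_zero (r : ℕ) (i : ℤ) : uu r i ≠ 0 := by
  unfold uu
  split
  · intro h
    rw [IsFractionRing.to_map_eq_zero_iff] at h
    exact MvPolynomial.X_ne_zero _ h
  · exact one_ne_zero

lemma xx_mul (r : ℕ) (i : ℤ) : xx r i * uu r i = uu r (i - 1) + uu r (i + 1) :=
  div_mul_cancel₀ _ (uu_ne_zero r i)

noncomputable def DD (r : ℕ) (n : ℕ) : FF r := ∏ i ∈ Finset.range n, uu r i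

lemma DD_ne_zero (r n : ℕ) : DD r n ≠ 0 :=
  Finset.prod_ne_zero_iff.2 fun i _ => uu_ne_zero r i

noncomputable def AA (r : ℕ) : ℕ → FF r
  | 0 => 1
  | (n+1) => uu r (n+1) * AA r n + DD r n

lemma uu_neg_one (r : ℕ) : uu r (-1) = 1 := by simp [uu]

lemma key (r : ℕ) : ∀ n : ℕ, DD r n * cheb n (fun i => xx r i) = AA r n
  | 0 => by simp [DD, AA, cheb]
  | 1 => by
      have h := xx_mul r 0
      simp only [zero_sub, zero_add] at h
      rw [uu_neg_one r] at h
      simp only [DD, AA, cheb, Finset.prod_range_one, Finset.prod_range_zero]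
      push_cast
      rw [mul_comm, h]
      ring
  | (n+2) => by
      have k1 := key r (n+1)
      have k0 := key r n
      have hx : xx r ((n:ℤ)+1) * uu r ((n:ℤ)+1) = uu r n + uu r ((n:ℤ)+2) := by
        have h := xx_mul r ((n:ℤ)+1)
        rw [show ((n:ℤ)+1-1) = (n:ℤ) by ring, show ((n:ℤ)+1+1) = (n:ℤ)+2 by ring] at h
        exact h
      have hD2 : DD r (n+2) = DD r n * uu r n * uu r ((n:ℤ)+1) := by
        simp only [DD, Finset.prod_range_succ]
        push_cast
        ring
      have hD1 : DD r (n+1) = DD r n * uu r n := by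
        simp only [DD, Finset.prod_range_succ]
      have hA2 : AA r (n+2) = uu r ((n:ℤ)+2) * AA r (n+1) + DD r n * uu r n := by
        show uu r ((n+2 : ℕ)) * AA r (n+1) + DD r (n+1) = _
        rw [hD1]
        push_cast
        ring
      have hA1 : AA r (n+1) = uu r ((n:ℤ)+1) * AA r n + DD r n := by
        show uu r ((n+1 : ℕ)) * AA r n + DD r n = _
        push_cast
        ring
      have e1 : cheb (n+2) (fun i : ℕ => xx r i) =
          xx r ((n:ℤ)+1) * cheb (n+1) (fun i : ℕ => xx r i) - cheb n (fun i : ℕ => xx r i) := by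
        simp only [cheb]
        push_cast
        ring
      rw [e1, hA2, hD2]
      rw [hD1] at k1
      linear_combination (uu r ((n:ℤ)+1) * xx r ((n:ℤ)+1)) * k1 -
        (uu r n * uu r ((n:ℤ)+1)) * k0 + AA r (n+1) * hx + uu r n * hA1

noncomputable def gfun (r : ℕ) : Fin (r+1) → FF r :=
  fun j => if (j:ℕ) < r then xx r j else uu r ((r:ℤ)-1)

noncomputable def psi (r : ℕ) : MvPolynomial (Fin (r+1)) ℤ →ₐ[ℤ] FF r := aeval (gfun r)

noncomputable def tg (r : ℕ) : ℕ → MvPolynomial (Fin (r+1)) ℤ :=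
  fun k => if h : k < r+1 then X (⟨k, h⟩ : Fin (r+1)) else 0

lemma psi_tg_lt {r k : ℕ} (hk : k < r) : psi r (tg r k) = xx r k := by
  simp only [tg, dif_pos (by omega : k < r+1), psi, MvPolynomial.aeval_X]
  simp [gfun, hk]

lemma psi_tg_self (r : ℕ) : psi r (tg r r) = uu r ((r:ℤ)-1) := by
  simp only [tg, dif_pos (by omega : r < r+1), psi, MvPolynomial.aeval_X]
  simp [gfun]

lemma psi_tg_ge {r k : ℕ} (hk : r+1 ≤ k) : psi r (tg r k) = 0 := by
  simp only [tg, dif_neg (by omega : ¬ k < r+1), map_zero]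

lemma uu_out (r : ℕ) {i : ℤ} (h : ¬ (0 ≤ i ∧ i < r)) : uu r i = 1 := by
  simp only [uu, dif_neg h]

lemma cheb_xn_eq (r n : ℕ) : cheb n (fun i : ℕ => xx r i) = AA r n / DD r n :=
  (eq_div_iff (DD_ne_zero r n)).2 (by rw [mul_comm]; exact key r n)

lemma psi_cheb (m : ℕ) :
    psi (m+1) (cheb (m+2) (tg (m+1))) = 1 := by
  set r := m+1 with hrdef
  have h1 : psi r (cheb (m+2) (tg r)) = cheb (m+2) (fun i => psi r (tg r i)) :=
    cheb_hom (psi r).toRingHom (m+2) (tg r)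
  rw [h1]
  have e1 : cheb (m+2) (fun i => psi r (tg r i)) =
      psi r (tg r (m+1)) * cheb (m+1) (fun i => psi r (tg r i)) -
        cheb m (fun i => psi r (tg r i)) := rfl
  rw [e1, psi_tg_self r]
  have e2 : cheb (m+1) (fun i => psi r (tg r i)) = cheb (m+1) (fun i : ℕ => xx r i) :=
    cheb_congr _ _ _ (fun i hi => psi_tg_lt (by omega))
  have e3 : cheb m (fun i => psi r (tg r i)) = cheb m (fun i : ℕ => xx r i) :=
    cheb_congr _ _ _ (fun i hi => psi_tg_lt (by omega))
  rw [e2, e3, cheb_xn_eq, cheb_xn_eq]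
  have hA : AA r (m+1) = AA r m + DD r m := by
    show uu r ((m+1 : ℕ)) * AA r m + DD r m = _
    rw [uu_out r (by push_cast; omega)]
    ring
  have hD : DD r (m+1) = DD r m * uu r ((m:ℤ)) := by
    simp only [DD, Finset.prod_range_succ]
  have hu : ((r:ℤ) - 1) = (m:ℤ) := by rw [hrdef]; push_cast; ring
  rw [hA, hD, hu]
  field_simp [DD_ne_zero, uu_ne_zero]
  ring

lemma uu_rec (r : ℕ) (j : ℤ) : uu r (j-1) = xx r j * uu r j - uu r (j+1) := by
  have h := xx_mul r j
  linear_combination -h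

lemma uu_mem_adjoin (r : ℕ) (hr : 1 ≤ r) :
    ∀ d : ℕ, d < r → uu r ((r:ℤ)-1-d) ∈ Algebra.adjoin ℤ (Set.range (gfun r)) := by
  intro d
  induction d using Nat.strong_induction_on with
  | _ d ih =>
    match d with
    | 0 =>
      intro _
      push_cast
      have : uu r ((r:ℤ)-1-0) = gfun r (Fin.last r) := by
        simp only [gfun, Fin.val_last, lt_irrefl, if_neg (lt_irrefl r)]
        norm_num
      rw [this]
      exact Algebra.subset_adjoin ⟨Fin.last r, rfl⟩
    | (d+1) =>
      intro hd
      push_cast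
      have hj : uu r ((r:ℤ)-1-((d:ℤ)+1)) = uu r (((r:ℤ)-1-d) - 1) := by ring_nf
      rw [hj, uu_rec]
      have hx : xx r ((r:ℤ)-1-d) ∈ Algebra.adjoin ℤ (Set.range (gfun r)) := by
        have hlt : r - 1 - d < r + 1 := by omega
        have : xx r ((r:ℤ)-1-d) = gfun r ⟨r-1-d, hlt⟩ := by
          simp only [gfun]
          rw [if_pos (by omega : r-1-d < r)]
          congr 1
          push_cast [Nat.cast_sub (by omega : d ≤ r - 1), Nat.cast_sub hr]
          ring
        rw [this]
        exact Algebra.subset_adjoin ⟨_, rfl⟩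
      have hu1 : uu r ((r:ℤ)-1-d) ∈ Algebra.adjoin ℤ (Set.range (gfun r)) := ih d (by omega) (by omega)
      have hu2 : uu r (((r:ℤ)-1-d)+1) ∈ Algebra.adjoin ℤ (Set.range (gfun r)) := by
        match d with
        | 0 =>
          rw [uu_out r (by omega)]
          exact Subalgebra.one_mem _
        | (e+1) =>
          have : ((r:ℤ)-1-((e+1:ℕ)))+1 = (r:ℤ)-1-e := by push_cast; ring
          rw [this]
          exact ih e (by omega) (by omega)
      exact Subalgebra.sub_mem _ (Subalgebra.mul_mem _ hx hu1) hu2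

lemma range_psi (r : ℕ) (hr : 1 ≤ r) :
    Algebra.adjoin ℤ (Set.range (gfun r)) =
      Algebra.adjoin ℤ ((Set.range fun i : Fin r => uu r i) ∪ (Set.range fun i : Fin r => xx r i)) := by
  apply le_antisymm
  · apply Algebra.adjoin_le
    rintro z ⟨j, rfl⟩
    by_cases h : (j:ℕ) < r
    · apply Algebra.subset_adjoin
      right
      refine ⟨⟨j, h⟩, ?_⟩
      simp only [gfun, if_pos h]
    · apply Algebra.subset_adjoin
      left
      refine ⟨⟨r-1, by omega⟩, ?_⟩
      simp only [gfun, if_neg h]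
      congr 1
      push_cast [Nat.cast_sub hr]
      ring
  · apply Algebra.adjoin_le
    rintro z (⟨i, rfl⟩ | ⟨i, rfl⟩)
    · show uu r ((i:ℕ):ℤ) ∈ _
      have : uu r ((i:ℕ):ℤ) = uu r ((r:ℤ)-1-((r-1-(i:ℕ) : ℕ))) := by
        congr 1
        push_cast [Nat.cast_sub (by omega : (i:ℕ) ≤ r - 1), Nat.cast_sub hr]
        have := i.isLt
        omega
      rw [this]
      exact uu_mem_adjoin r hr _ (by have := i.isLt; omega)
    · show xx r ((i:ℕ):ℤ) ∈ _
      have hlt : (i:ℕ) < r + 1 := by have := i.isLt; omega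
      have : xx r ((i:ℕ):ℤ) = gfun r ⟨i, hlt⟩ := by
        simp only [gfun, if_pos (show ((⟨i, hlt⟩ : Fin (r+1)):ℕ) < r from i.isLt)]
      rw [this]
      exact Algebra.subset_adjoin ⟨_, rfl⟩


/-! ### Algebraic independence -/

section Indep

variable {F K : Type*} [Field F] [Field K] [Algebra F K]

lemma closure_ne_zero {S : Set K} (hS : ∀ s ∈ S, s ≠ (0:K)) {M : K}
    (hM : M ∈ Submonoid.closure S) : M ≠ 0 := by
  induction hM using Submonoid.closure_induction with
  | mem x h => exact hS x h
  | one => exact one_ne_zero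
  | mul x y hx hy hx' hy' => exact mul_ne_zero hx' hy'

lemma clear_denominators {S : Set K} (hS : ∀ s ∈ S, s ≠ (0:K)) {b : K}
    (hb : b ∈ Algebra.adjoin F (S ∪ Inv.inv '' S)) :
    ∃ M ∈ Submonoid.closure S, M * b ∈ Algebra.adjoin F S := by
  induction hb using Algebra.adjoin_induction with
  | mem z hz =>
    rcases hz with hz | ⟨y, hy, rfl⟩
    · exact ⟨1, Submonoid.one_mem _, by simpa using Algebra.subset_adjoin hz⟩
    · exact ⟨y, Submonoid.subset_closure hy, by
        rw [mul_inv_cancel₀ (hS y hy)]; exact Subalgebra.one_mem _⟩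
  | algebraMap r => exact ⟨1, Submonoid.one_mem _, by simpa using Subalgebra.algebraMap_mem _ r⟩
  | add x y hx hy ihx ihy =>
    obtain ⟨M₁, hM₁, h₁⟩ := ihx
    obtain ⟨M₂, hM₂, h₂⟩ := ihy
    have hcl : (Submonoid.closure S : Set K) ⊆ (Algebra.adjoin F S : Set K) :=
      Submonoid.closure_le.2 Algebra.subset_adjoin
    refine ⟨M₁ * M₂, Submonoid.mul_mem _ hM₁ hM₂, ?_⟩
    have : M₁ * M₂ * (x + y) = M₂ * (M₁ * x) + M₁ * (M₂ * y) := by ring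
    rw [this]
    exact Subalgebra.add_mem _ (Subalgebra.mul_mem _ (hcl hM₂) h₁)
      (Subalgebra.mul_mem _ (hcl hM₁) h₂)
  | mul x y hx hy ihx ihy =>
    obtain ⟨M₁, hM₁, h₁⟩ := ihx
    obtain ⟨M₂, hM₂, h₂⟩ := ihy
    refine ⟨M₁ * M₂, Submonoid.mul_mem _ hM₁ hM₂, ?_⟩
    have : M₁ * M₂ * (x * y) = (M₁ * x) * (M₂ * y) := by ring
    rw [this]
    exact Subalgebra.mul_mem _ h₁ h₂

lemma isAlgebraic_of_adjoin_inv {S : Set K} (hS : ∀ s ∈ S, s ≠ (0:K)) {z : K}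
    (h : IsAlgebraic (Algebra.adjoin F (S ∪ Inv.inv '' S)) z) :
    IsAlgebraic (Algebra.adjoin F S) z := by
  classical
  set B := Algebra.adjoin F (S ∪ Inv.inv '' S)
  set A := Algebra.adjoin F S
  obtain ⟨p, hp0, hpz⟩ := h
  choose Ms hMscl hMsA using fun n : ℕ => clear_denominators (F := F) hS (p.coeff n).2
  set M : K := ∏ n ∈ p.support, Ms n with hMdef
  have hMcl : M ∈ Submonoid.closure S := Submonoid.prod_mem _ (fun n _ => hMscl n)
  have hcl : (Submonoid.closure S : Set K) ⊆ (A : Set K) :=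
    Submonoid.closure_le.2 Algebra.subset_adjoin
  have hmem : ∀ n : ℕ, M * (p.coeff n : K) ∈ A := by
    intro n
    by_cases hn : n ∈ p.support
    · rw [hMdef, ← Finset.mul_prod_erase _ _ hn, mul_comm (Ms n), mul_assoc]
      exact Subalgebra.mul_mem _ (hcl (Submonoid.prod_mem _ fun i _ => hMscl i)) (hMsA n)
    · rw [Polynomial.notMem_support_iff.1 hn]
      simpa using Subalgebra.zero_mem A
  set q : Polynomial A := ∑ n ∈ p.support, Polynomial.monomial n (⟨M * (p.coeff n : K), hmem n⟩ : A)
  have hqcoeff : ∀ n ∈ p.support, (q.coeff n : K) = M * (p.coeff n : K) := by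
    intro n hn
    rw [Polynomial.finset_sum_coeff]
    rw [Finset.sum_eq_single n (fun b _ hb => by
      rw [Polynomial.coeff_monomial, if_neg hb]) (fun h => absurd hn h)]
    rw [Polynomial.coeff_monomial, if_pos rfl]
  have hMne : M ≠ 0 := closure_ne_zero hS hMcl
  have hq0 : q ≠ 0 := by
    have hex : ∃ n, p.coeff n ≠ 0 := by
      by_contra hcon
      push_neg at hcon
      exact hp0 (Polynomial.ext fun n => by simp [hcon n])
    obtain ⟨n, hn⟩ := hex
    have hns : n ∈ p.support := Polynomial.mem_support_iff.2 hn
    intro hq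
    have hc := hqcoeff n hns
    rw [hq] at hc
    simp only [Polynomial.coeff_zero, ZeroMemClass.coe_zero] at hc
    have hzero : (p.coeff n : K) = 0 := by
      rcases mul_eq_zero.1 hc.symm with h | h
      · exact absurd h hMne
      · exact h
    exact hn (Subtype.ext hzero)
  refine ⟨q, hq0, ?_⟩
  have h1 : Polynomial.aeval z q = ∑ n ∈ p.support, M * (p.coeff n : K) * z ^ n := by
    rw [map_sum]
    refine Finset.sum_congr rfl fun n _ => ?_
    rw [Polynomial.aeval_monomial]
    rfl
  have h2 : Polynomial.aeval z p = ∑ n ∈ p.support, (p.coeff n : K) * z ^ n := by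
    rw [Polynomial.aeval_def, Polynomial.eval₂_eq_sum, Polynomial.sum_def]
    rfl
  rw [h1]
  have h3 : ∑ n ∈ p.support, M * (p.coeff n : K) * z ^ n = M * Polynomial.aeval z p := by
    rw [h2, Finset.mul_sum]
    exact Finset.sum_congr rfl fun n _ => by ring
  rw [h3, hpz, mul_zero]

end Indep


noncomputable def uX (r : ℕ) : Fin r → FF r :=
  fun i => algebraMap (MvPolynomial (Fin r) ℚ) (FF r) (X i)

lemma uX_ne_zero (r : ℕ) (i : Fin r) : uX r i ≠ 0 := by
  intro h
  rw [uX, IsFractionRing.to_map_eq_zero_iff] at h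
  exact MvPolynomial.X_ne_zero _ h

lemma uX_indep (r : ℕ) : AlgebraicIndependent ℚ (uX r) := by
  have h := (MvPolynomial.algebraicIndependent_X (Fin r) ℚ).map'
    (f := IsScalarTower.toAlgHom ℚ (MvPolynomial (Fin r) ℚ) (FF r))
    (IsFractionRing.injective _ _)
  exact h

lemma uu_eq_uX (r : ℕ) (n : ℕ) (hn : n < r) : uu r (n : ℤ) = uX r ⟨n, hn⟩ := by
  rw [uu, dif_pos ⟨Int.natCast_nonneg n, by exact_mod_cast hn⟩]
  rfl

noncomputable def Wf (r : ℕ) : ℕ → FF r :=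
  fun k => if k = 0 then uu r ((r:ℤ)-1) else xx r ((r:ℤ)-k)

noncomputable def yfam (r k : ℕ) : Fin k → FF r :=
  fun j => if h : r - k + (j:ℕ) < r then uX r ⟨r - k + (j:ℕ), h⟩ else 1

lemma yfam_eq (r k : ℕ) (hk : k ≤ r) (j : Fin k) :
    yfam r k j = uX r ⟨r - k + (j:ℕ), by have := j.isLt; omega⟩ := by
  rw [yfam, dif_pos]

lemma yfam_ne_zero (r k : ℕ) (hk : k ≤ r) : ∀ s ∈ Set.range (yfam r k), s ≠ (0 : FF r) := by
  rintro s ⟨j, rfl⟩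
  rw [yfam_eq r k hk]
  exact uX_ne_zero r _

lemma trans_uX (r k : ℕ) (hk1 : k + 1 ≤ r) :
    Transcendental (Algebra.adjoin ℚ (Set.range (yfam r k)))
      (uX r ⟨r-1-k, by omega⟩) := by
  have hy : AlgebraicIndependent ℚ (yfam r k) := by
    have h2 := (uX_indep r).comp
      (fun j : Fin k => (⟨r - k + (j:ℕ), by have := j.isLt; omega⟩ : Fin r))
      (fun a b hab => by
        have : r - k + (a:ℕ) = r - k + (b:ℕ) := congrArg Fin.val hab
        exact Fin.ext (by omega))
    have heq : yfam r k = (uX r) ∘ (fun j : Fin k =>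
        (⟨r - k + (j:ℕ), by have := j.isLt; omega⟩ : Fin r)) := by
      funext j
      rw [yfam_eq r k (by omega)]
      rfl
    rw [heq]
    exact h2
  have hopt : AlgebraicIndependent ℚ
      (fun o : Option (Fin k) => o.elim (uX r ⟨r-1-k, by omega⟩) (yfam r k)) := by
    have hcomp := (uX_indep r).comp
      (fun o : Option (Fin k) => o.elim (⟨r-1-k, by omega⟩ : Fin r)
        (fun j => ⟨r - k + (j:ℕ), by have := j.isLt; omega⟩))
      (fun a b hab => by
        cases a with
        | none =>
          cases b with
          | none => rfl
          | some j =>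
            have : r - 1 - k = r - k + (j:ℕ) := congrArg Fin.val hab
            have := j.isLt
            omega
        | some i =>
          cases b with
          | none =>
            have : r - k + (i:ℕ) = r - 1 - k := congrArg Fin.val hab
            have := i.isLt
            omega
          | some j =>
            have : r - k + (i:ℕ) = r - k + (j:ℕ) := congrArg Fin.val hab
            exact congrArg _ (Fin.ext (by omega)))
    have heq : (fun o : Option (Fin k) => o.elim (uX r ⟨r-1-k, by omega⟩) (yfam r k)) =
        (uX r) ∘ (fun o : Option (Fin k) => o.elim (⟨r-1-k, by omega⟩ : Fin r)
          (fun j => ⟨r - k + (j:ℕ), by have := j.isLt; omega⟩)) := by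
      funext o
      cases o with
      | none => rfl
      | some j =>
        show yfam r k j = _
        rw [yfam_eq r k (by omega)]
        rfl
    rw [heq]
    exact hcomp
  exact (hy.option_iff_transcendental _).mp hopt

lemma trans_uX_B (r k : ℕ) (hk1 : k + 1 ≤ r) :
    Transcendental (Algebra.adjoin ℚ
        (Set.range (yfam r k) ∪ Inv.inv '' Set.range (yfam r k)))
      (uX r ⟨r-1-k, by omega⟩) := by
  intro halg
  exact trans_uX r k hk1 (isAlgebraic_of_adjoin_inv (yfam_ne_zero r k (by omega)) halg)

lemma uu_mem_Su (r k : ℕ) (hk : k ≤ r) (i : ℤ) (h1 : (r:ℤ)-k ≤ i) (h2 : i < r) :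
    uu r i ∈ Set.range (yfam r k) := by
  have hmem : uu r i = uX r ⟨r - k + (i - ((r:ℤ)-k)).toNat, by omega⟩ := by
    rw [← uu_eq_uX r _ (by omega)]
    congr 1
    push_cast
    omega
  exact ⟨⟨(i - ((r:ℤ)-k)).toNat, by omega⟩, by rw [yfam_eq r k hk, hmem]⟩

lemma trans_W_B (r k : ℕ) (hk1 : k + 1 ≤ r) :
    Transcendental (Algebra.adjoin ℚ
        (Set.range (yfam r k) ∪ Inv.inv '' Set.range (yfam r k)))
      (Wf r k) := by
  rcases Nat.eq_zero_or_pos k with rfl | hk0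
  · have h := trans_uX_B r 0 hk1
    have heq : Wf r 0 = uX r ⟨r-1-0, by omega⟩ := by
      rw [Wf, if_pos rfl, show (r:ℤ)-1 = ((r-1-0:ℕ):ℤ) by omega, uu_eq_uX]
    rw [heq]
    exact h
  · intro halg
    set B := Algebra.adjoin ℚ
      (Set.range (yfam r k) ∪ Inv.inv '' Set.range (yfam r k)) with hBdef
    set c := uu r ((r:ℤ)-k) with hcdef
    set e := uu r ((r:ℤ)-k+1) with hedef
    set z := uX r (⟨r-1-k, by omega⟩ : Fin r) with hzdef
    have hc0 : c ≠ 0 := uu_ne_zero _ _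
    have hcSu : c ∈ Set.range (yfam r k) := uu_mem_Su r k (by omega) _ (by omega) (by omega)
    have hcinvB : c⁻¹ ∈ B := Algebra.subset_adjoin (Or.inr ⟨c, hcSu, rfl⟩)
    have heB : e ∈ B := by
      rcases Nat.eq_or_lt_of_le hk0 with h1 | h1
      · rw [hedef, show (r:ℤ)-k+1 = (r:ℤ) by omega,
          uu_out r (by omega : ¬((0:ℤ) ≤ (r:ℤ) ∧ (r:ℤ) < (r:ℕ)))]
        exact one_mem _
      · exact Algebra.subset_adjoin (Or.inl (uu_mem_Su r k (by omega) _ (by omega) (by omega)))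
    have hzc : uu r ((r:ℤ)-k-1) = z := by
      rw [show (r:ℤ)-k-1 = ((r-1-k:ℕ):ℤ) by omega, uu_eq_uX]
    have hW : Wf r k = c⁻¹ * z + c⁻¹ * e := by
      rw [Wf, if_neg (by omega)]
      rw [xx]
      rw [hzc]
      field_simp
      rw [← hcdef, ← hedef, mul_div_assoc, div_self hc0, mul_one]
    obtain ⟨p, hp0, hpz⟩ := halg
    set cinv : B := ⟨c⁻¹, hcinvB⟩ with hcinvdef
    set ce : B := ⟨c⁻¹ * e, mul_mem hcinvB heB⟩ with hcedef
    set l : Polynomial B := Polynomial.C cinv * Polynomial.X + Polynomial.C ce with hldef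
    have hq0 : p.comp l ≠ 0 := by
      intro h
      rcases Polynomial.comp_eq_zero_iff.mp h with h' | ⟨_, hl⟩
      · exact hp0 h'
      · have h1 : l.coeff 1 = cinv := by
          simp [hldef]
        rw [hl] at h1
        simp only [Polynomial.coeff_C] at h1
        have : (cinv : FF r) = 0 := by rw [← h1]; simp
        exact inv_ne_zero hc0 this
    have heval : Polynomial.aeval z (p.comp l) = 0 := by
      rw [Polynomial.aeval_comp]
      have hl : Polynomial.aeval z l = Wf r k := by
        rw [hW, hldef]
        simp only [map_add, map_mul, Polynomial.aeval_C, Polynomial.aeval_X]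
        rfl
      rw [hl, hpz]
    exact trans_uX_B r k hk1 ⟨p.comp l, hq0, heval⟩

lemma prefix_le_B (r k : ℕ) (hk1 : k + 1 ≤ r) :
    Algebra.adjoin ℚ (Set.range fun i : Fin k => Wf r (i:ℕ)) ≤
      Algebra.adjoin ℚ (Set.range (yfam r k) ∪ Inv.inv '' Set.range (yfam r k)) := by
  apply Algebra.adjoin_le
  rintro z ⟨i, rfl⟩
  show Wf r (i:ℕ) ∈ _
  have hik := i.isLt
  by_cases hi : (i:ℕ) = 0
  · rw [hi, Wf, if_pos rfl]
    exact Algebra.subset_adjoin (Or.inl (uu_mem_Su r k (by omega) _ (by omega) (by omega)))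
  · rw [Wf, if_neg hi]
    rw [xx, div_eq_mul_inv]
    apply mul_mem
    · apply add_mem
      · exact Algebra.subset_adjoin (Or.inl (uu_mem_Su r k (by omega) _ (by omega) (by omega)))
      · by_cases hi1 : (i:ℕ) = 1
        · rw [show (r:ℤ)-(i:ℕ)+1 = (r:ℤ) by omega,
            uu_out r (by omega : ¬((0:ℤ) ≤ (r:ℤ) ∧ (r:ℤ) < (r:ℕ)))]
          exact one_mem _
        · exact Algebra.subset_adjoin (Or.inl (uu_mem_Su r k (by omega) _ (by omega) (by omega)))
    · exact Algebra.subset_adjoin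
        (Or.inr ⟨uu r ((r:ℤ)-(i:ℕ)), uu_mem_Su r k (by omega) _ (by omega) (by omega), rfl⟩)

lemma W_indep (r : ℕ) (hr : 1 ≤ r) :
    ∀ k, k ≤ r → AlgebraicIndependent ℚ (fun i : Fin k => Wf r (i:ℕ)) := by
  intro k
  induction k with
  | zero => intro _; exact algebraicIndependent_empty_type
  | succ k ih =>
    intro hk1
    have hk := ih (by omega)
    have htr : Transcendental (Algebra.adjoin ℚ (Set.range fun i : Fin k => Wf r (i:ℕ)))
        (Wf r k) :=
      Transcendental.of_tower_top_of_subalgebra_le (prefix_le_B r k hk1) (trans_W_B r k hk1)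
    have hopt := (hk.option_iff_transcendental (Wf r k)).mpr htr
    refine (algebraicIndependent_equiv' (finSuccEquivLast) ?_).mpr hopt
    funext i
    refine Fin.lastCases ?_ ?_ i
    · show _ = Wf r ((Fin.last k : Fin (k+1)):ℕ)
      simp [finSuccEquivLast_last]
    · intro j
      show _ = Wf r ((j.castSucc : Fin (k+1)):ℕ)
      simp [finSuccEquivLast_castSucc]

lemma v_indep (m : ℕ) :
    AlgebraicIndependent ℚ (fun i : Fin (m+1) => gfun (m+1) i.succ) := by
  have hW := W_indep (m+1) (by omega) (m+1) le_rfl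
  have h2 := hW.comp Fin.rev Fin.rev_injective
  have heq : ((fun i : Fin (m+1) => Wf (m+1) (i:ℕ)) ∘ Fin.rev) =
      (fun i : Fin (m+1) => gfun (m+1) i.succ) := by
    funext i
    show Wf (m+1) ((Fin.rev i : Fin (m+1)):ℕ) = gfun (m+1) i.succ
    have hrev : ((Fin.rev i : Fin (m+1)):ℕ) = m - (i:ℕ) := by
      rw [Fin.val_rev]
      omega
    have hik := i.isLt
    rw [hrev]
    by_cases hi : (i:ℕ) = m
    · rw [hi, Nat.sub_self, Wf, if_pos rfl, gfun]
      rw [if_neg (by simp [Fin.val_succ, hi])]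
    · rw [Wf, if_neg (by omega), gfun, if_pos (by simp [Fin.val_succ]; omega)]
      congr 1
      simp only [Fin.val_succ]
      push_cast
      omega
  rw [heq] at h2
  exact h2

noncomputable def psiC (m : ℕ) : MvPolynomial (Fin (m+1)) ℤ →ₐ[ℤ] FF (m+1) :=
  aeval (fun i : Fin (m+1) => gfun (m+1) i.succ)

lemma psiC_inj (m : ℕ) : Function.Injective (psiC m) := by
  have hQ : Function.Injective
      (MvPolynomial.aeval (R := ℚ) (fun i : Fin (m+1) => gfun (m+1) i.succ)) :=
    algebraicIndependent_iff_injective_aeval.mp (v_indep m)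
  have hmap : Function.Injective
      (MvPolynomial.map (algebraMap ℤ ℚ) : MvPolynomial (Fin (m+1)) ℤ → MvPolynomial (Fin (m+1)) ℚ) :=
    MvPolynomial.map_injective _ (fun a b h => by exact_mod_cast h)
  have hcomp : ∀ f, psiC m f =
      MvPolynomial.aeval (R := ℚ) (fun i : Fin (m+1) => gfun (m+1) i.succ)
        (MvPolynomial.map (algebraMap ℤ ℚ) f) := by
    have hhom : (psiC m).toRingHom =
        ((MvPolynomial.aeval (R := ℚ) (fun i : Fin (m+1) => gfun (m+1) i.succ)).toRingHom).comp
          (MvPolynomial.map (algebraMap ℤ ℚ)) := by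
      apply MvPolynomial.ringHom_ext
      · intro n
        simp [psiC, eq_intCast]
      · intro i
        simp [psiC]
    intro f
    exact congrFun (congrArg (fun h => h.toFun) hhom) f
  intro a b hab
  rw [hcomp, hcomp] at hab
  exact hmap (hQ hab)

/-! ### Kernel computation -/

noncomputable def tgen' (N : ℕ) : ℕ → MvPolynomial (Fin N) ℤ :=
  fun k => if h : k < N then X (⟨k, h⟩ : Fin N) else 0

lemma tg_eq_tgen' (r : ℕ) : tg r = tgen' (r+1) := by
  funext k
  rw [tg, tgen']

lemma ev2_tgen' (N n : ℕ) (hn : n ≤ N) :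
    MvPolynomial.eval (fun _ => (2:ℤ)) (cheb n (tgen' N)) = n+1 := by
  rw [cheb_hom (MvPolynomial.eval (fun _ => (2:ℤ))) n (tgen' N)]
  rw [cheb_congr n _ (fun _ => (2:ℤ)) (fun i hi => by
    rw [tgen', dif_pos (by omega)]
    simp)]
  exact_mod_cast cheb_two n

lemma chebA_ne_zero (N n : ℕ) (hn : n ≤ N) : cheb n (tgen' N) ≠ 0 := by
  intro h
  have := ev2_tgen' N n hn
  rw [h, map_zero] at this
  omega

lemma chebB_ne_zero (N n : ℕ) (hn : n ≤ N) : cheb n (tgen' N) + 1 ≠ 0 := by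
  intro h
  have h2 := ev2_tgen' N n hn
  have : MvPolynomial.eval (fun _ => (2:ℤ)) (cheb n (tgen' N) + 1) = 0 := by rw [h, map_zero]
  rw [map_add, map_one, h2] at this
  omega

section Kernel

variable (m : ℕ)

noncomputable def aCp (m : ℕ) : MvPolynomial (Fin (m+1)) ℤ := cheb (m+1) (tgen' (m+1))

noncomputable def bCp (m : ℕ) : MvPolynomial (Fin (m+1)) ℤ :=
  cheb m (fun i => tgen' (m+1) (i+1)) + 1

lemma E_tgen_succ (N : ℕ) (i : ℕ) :
    (MvPolynomial.finSuccEquiv ℤ N) (tgen' (N+1) (i+1)) = Polynomial.C (tgen' N i) := by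
  by_cases h : i < N
  · rw [tgen', dif_pos (by omega : i+1 < N+1), tgen', dif_pos h]
    have : (⟨i+1, by omega⟩ : Fin (N+1)) = Fin.succ ⟨i, h⟩ := rfl
    rw [this, finSuccEquiv_X_succ]
  · rw [tgen', dif_neg (by omega : ¬ i+1 < N+1), tgen', dif_neg h, map_zero, map_zero]

lemma E_tgen_zero (N : ℕ) :
    (MvPolynomial.finSuccEquiv ℤ N) (tgen' (N+1) 0) = Polynomial.X := by
  rw [tgen', dif_pos (by omega : 0 < N+1)]
  have : (⟨0, by omega⟩ : Fin (N+1)) = 0 := rfl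
  rw [this, finSuccEquiv_X_zero]

lemma E_cheb_shift (N n : ℕ) (s : ℕ) :
    (MvPolynomial.finSuccEquiv ℤ N) (cheb n (fun i => tgen' (N+1) (i+1+s))) =
      Polynomial.C (cheb n (fun i => tgen' N (i+s))) := by
  rw [cheb_hom (MvPolynomial.finSuccEquiv ℤ N) n]
  rw [cheb_hom (Polynomial.C : MvPolynomial (Fin N) ℤ →+* Polynomial (MvPolynomial (Fin N) ℤ)) n]
  congr 1
  funext i
  rw [show i+1+s = i+s+1 by ring]
  exact E_tgen_succ N (i+s)

lemma E_p (m : ℕ) :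
    (MvPolynomial.finSuccEquiv ℤ (m+1)) (cheb (m+2) (tgen' (m+2)) - 1) =
      Polynomial.C (aCp m) * Polynomial.X - Polynomial.C (bCp m) := by
  rw [map_sub, map_one]
  rw [show cheb (m+2) (tgen' (m+2)) =
      tgen' (m+2) 0 * cheb (m+1) (fun i => tgen' (m+2) (i+1)) - chebm (m+1) (tgen' (m+2))
    from cheb_peel (m+1) _]
  rw [map_sub, map_mul, E_tgen_zero]
  have h1 : (MvPolynomial.finSuccEquiv ℤ (m+1)) (cheb (m+1) (fun i => tgen' (m+2) (i+1))) =
      Polynomial.C (aCp m) := by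
    have := E_cheb_shift (m+1) (m+1) 0
    simpa [aCp] using this
  have h2 : (MvPolynomial.finSuccEquiv ℤ (m+1)) (chebm (m+1) (tgen' (m+2))) =
      Polynomial.C (bCp m - 1) := by
    show (MvPolynomial.finSuccEquiv ℤ (m+1)) (cheb m (fun i => tgen' (m+2) (i+2))) = _
    have := E_cheb_shift (m+1) m 1
    rw [show (bCp m - 1) = cheb m (fun i => tgen' (m+1) (i+1)) from by rw [bCp]; ring]
    simpa using this
  rw [h1, h2]
  rw [map_sub]
  simp only [map_one]
  ring

lemma E2_aCp (m : ℕ) :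
    ∃ dd, (MvPolynomial.finSuccEquiv ℤ m) (aCp m) =
      Polynomial.X * Polynomial.C (cheb m (tgen' m)) - Polynomial.C dd := by
  rw [aCp, show cheb (m+1) (tgen' (m+1)) =
      tgen' (m+1) 0 * cheb m (fun i => tgen' (m+1) (i+1)) - chebm m (tgen' (m+1))
    from cheb_peel m _]
  rw [map_sub, map_mul, E_tgen_zero]
  have h1 : (MvPolynomial.finSuccEquiv ℤ m) (cheb m (fun i => tgen' (m+1) (i+1))) =
      Polynomial.C (cheb m (tgen' m)) := by
    have := E_cheb_shift m m 0
    simpa using this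
  rw [h1]
  match m with
  | 0 =>
    exact ⟨0, by rw [show chebm 0 (tgen' 1) = 0 from rfl]; simp⟩
  | (m'+1) =>
    refine ⟨cheb m' (fun i => tgen' (m'+1) (i+1)), ?_⟩
    rw [show chebm (m'+1) (tgen' (m'+2)) = cheb m' (fun i => tgen' (m'+2) (i+2)) from rfl]
    have := E_cheb_shift (m'+1) m' 1
    rw [show (fun i : ℕ => tgen' (m'+2) (i+1+1)) = (fun i : ℕ => tgen' (m'+2) (i+2)) from
      funext fun i => by ring_nf] at this
    rw [this]

lemma E2_bCp (m : ℕ) :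
    (MvPolynomial.finSuccEquiv ℤ m) (bCp m) = Polynomial.C (cheb m (tgen' m) + 1) := by
  rw [bCp, map_add, map_one]
  have := E_cheb_shift m m 0
  have h1 : (MvPolynomial.finSuccEquiv ℤ m) (cheb m (fun i => tgen' (m+1) (i+1))) =
      Polynomial.C (cheb m (tgen' m)) := by simpa using this
  rw [h1, map_add]
  simp

lemma G_primitive (m : ℕ) :
    (Polynomial.C (aCp m) * Polynomial.X - Polynomial.C (bCp m)).IsPrimitive := by
  intro q hq
  have hqa : q ∣ aCp m := by
    have := (Polynomial.C_dvd_iff_dvd_coeff q _).mp hq 1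
    simpa using this
  have hqb : q ∣ bCp m := by
    have := (Polynomial.C_dvd_iff_dvd_coeff q _).mp hq 0
    simp only [Polynomial.coeff_sub, Polynomial.coeff_C_mul, Polynomial.coeff_X_zero,
      mul_zero, Polynomial.coeff_C, zero_sub, dvd_neg] at this
    simpa using this
  set E2 := MvPolynomial.finSuccEquiv ℤ m
  obtain ⟨dd, hEa⟩ := E2_aCp m
  have hEb := E2_bCp m
  have h2a : E2 q ∣ E2 (aCp m) := map_dvd (E2 : MvPolynomial (Fin (m+1)) ℤ →+* Polynomial (MvPolynomial (Fin m) ℤ)) hqa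
  have h2b : E2 q ∣ E2 (bCp m) := map_dvd (E2 : MvPolynomial (Fin (m+1)) ℤ →+* Polynomial (MvPolynomial (Fin m) ℤ)) hqb
  rw [hEa] at h2a
  rw [hEb] at h2b
  have hb0 : cheb m (tgen' m) + 1 ≠ 0 := chebB_ne_zero m m le_rfl
  have hdeg : (E2 q).degree ≤ 0 := by
    have hC0 : (Polynomial.C (cheb m (tgen' m) + 1) : Polynomial (MvPolynomial (Fin m) ℤ)) ≠ 0 := by
      rwa [Ne, Polynomial.C_eq_zero]
    have hdeg' := Polynomial.degree_le_of_dvd h2b hC0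
    rwa [Polynomial.degree_C hb0] at hdeg'
  have hq2 : E2 q = Polynomial.C ((E2 q).coeff 0) := Polynomial.eq_C_of_degree_le_zero hdeg
  set qq := (E2 q).coeff 0 with hqqdef
  rw [hq2] at h2a h2b
  have hqqc : qq ∣ cheb m (tgen' m) := by
    have := (Polynomial.C_dvd_iff_dvd_coeff qq _).mp h2a 1
    simpa using this
  have hqqb : qq ∣ cheb m (tgen' m) + 1 := by
    have := (Polynomial.C_dvd_iff_dvd_coeff qq _).mp h2b 0
    simpa using this
  have hqq1 : IsUnit qq := isUnit_of_dvd_one (by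
    have := dvd_sub hqqb hqqc
    simpa using this)
  have hCqq : IsUnit (E2 q) := by
    rw [hq2]
    exact Polynomial.isUnit_C.mpr hqq1
  have := hCqq.map E2.symm
  simpa using this

end Kernel

lemma psi_p_zero (m : ℕ) : psi (m+1) (cheb (m+2) (tg (m+1)) - 1) = 0 := by
  rw [map_sub, map_one, psi_cheb, sub_self]

lemma psi_fac (m : ℕ) : ∀ g, psi (m+1) g =
    Polynomial.eval₂ (psiC m).toRingHom (xx (m+1) 0)
      ((MvPolynomial.finSuccEquiv ℤ (m+1)) g) := by
  have h : (psi (m+1)).toRingHom =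
      (Polynomial.eval₂RingHom (psiC m).toRingHom (xx (m+1) 0)).comp
        ((MvPolynomial.finSuccEquiv ℤ (m+1)) :
          MvPolynomial (Fin (m+2)) ℤ →+* Polynomial (MvPolynomial (Fin (m+1)) ℤ)) := by
    apply MvPolynomial.ringHom_ext
    · intro n
      simp only [RingHom.coe_comp, Function.comp_apply, AlgHom.toRingHom_eq_coe, RingHom.coe_coe]
      rw [show (MvPolynomial.C n : MvPolynomial (Fin (m+2)) ℤ) = algebraMap ℤ _ n from rfl]
      rw [AlgEquiv.commutes]
      simp [eq_intCast]
    · intro j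
      refine Fin.cases ?_ ?_ j
      · simp only [RingHom.coe_comp, Function.comp_apply, AlgHom.toRingHom_eq_coe,
          RingHom.coe_coe, finSuccEquiv_X_zero]
        rw [Polynomial.coe_eval₂RingHom, Polynomial.eval₂_X]
        show psi (m+1) (MvPolynomial.X 0) = xx (m+1) 0
        rw [psi, MvPolynomial.aeval_X]
        simp [gfun]
      · intro i
        simp only [RingHom.coe_comp, Function.comp_apply, AlgHom.toRingHom_eq_coe,
          RingHom.coe_coe, finSuccEquiv_X_succ]
        rw [Polynomial.coe_eval₂RingHom, Polynomial.eval₂_C]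
        show psi (m+1) (MvPolynomial.X i.succ) = psiC m (MvPolynomial.X i)
        rw [psi, MvPolynomial.aeval_X, psiC, MvPolynomial.aeval_X]
  intro g
  exact congrFun (congrArg (fun h => h.toFun) h) g

lemma ker_psi_le (m : ℕ) :
    ∀ f, psi (m+1) f = 0 → (cheb (m+2) (tg (m+1)) - 1) ∣ f := by
  classical
  intro f hf
  set CC := MvPolynomial (Fin (m+1)) ℤ
  letI : NormalizationMonoid CC := UniqueFactorizationMonoid.normalizationMonoid.toNormalizationMonoid
  letI : NormalizedGCDMonoid CC := UniqueFactorizationMonoid.toNormalizedGCDMonoid CC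
  set E := MvPolynomial.finSuccEquiv ℤ (m+1)
  set p := cheb (m+2) (tg (m+1)) - 1 with hpdef
  set F := E f with hFdef
  set G := Polynomial.C (aCp m) * Polynomial.X - Polynomial.C (bCp m) with hGdef
  have hEp : E p = G := by
    rw [hpdef, tg_eq_tgen']
    exact E_p m
  -- values
  have haC0 : aCp m ≠ 0 := chebA_ne_zero (m+1) (m+1) le_rfl
  have haval0 : psiC m (aCp m) ≠ 0 := by
    intro h
    exact haC0 (psiC_inj m (by simpa using h))
  have hrel : xx (m+1) 0 * psiC m (aCp m) = psiC m (bCp m) := by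
    have h0 : psi (m+1) p = 0 := psi_p_zero m
    rw [psi_fac m p, hEp] at h0
    rw [hGdef] at h0
    simp only [Polynomial.eval₂_sub, Polynomial.eval₂_mul, Polynomial.eval₂_C,
      Polynomial.eval₂_X] at h0
    have : psiC m (aCp m) * xx (m+1) 0 - psiC m (bCp m) = 0 := h0
    linear_combination this
  set K1 := FractionRing CC
  set ρ : CC →+* K1 := (algebraMap CC K1) with hρdef
  have hρinj : Function.Injective ρ := IsFractionRing.injective CC K1
  set Φ : K1 →+* FF (m+1) := IsFractionRing.lift (g := (psiC m).toRingHom) (psiC_inj m) with hΦdef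
  have hΦρ : ∀ c, Φ (ρ c) = psiC m c := fun c => IsFractionRing.lift_algebraMap _ _
  have hΦinj : Function.Injective Φ := Φ.injective
  by_cases hF0 : F = 0
  · have hfz : f = 0 := by
      have h2 := congrArg E.symm hF0
      rw [hFdef] at h2
      simpa using h2
    rw [hfz]
    exact dvd_zero _
  set β := ρ (bCp m) / ρ (aCp m) with hβdef
  have hu : ρ (aCp m) ≠ 0 := fun h => haC0 (hρinj (by simpa using h))
  have hΦβ : Φ β = xx (m+1) 0 := by
    rw [hβdef, map_div₀, hΦρ, hΦρ]
    rw [eq_comm, eq_div_iff (fun h => haval0 h)]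
    linear_combination hrel
  have hroot : Polynomial.eval₂ ρ β F = 0 := by
    apply hΦinj
    rw [map_zero, Polynomial.hom_eval₂]
    have h1 : Φ.comp ρ = (psiC m).toRingHom := RingHom.ext hΦρ
    rw [h1, hΦβ]
    rw [← psi_fac m f, hf]
  have hdvd1 : (Polynomial.X - Polynomial.C β) ∣ F.map ρ :=
    Polynomial.dvd_iff_isRoot.mpr (by
      rw [Polynomial.IsRoot, Polynomial.eval_map]
      exact hroot)
  have hGmap : G.map ρ = Polynomial.C (ρ (aCp m)) * (Polynomial.X - Polynomial.C β) := by
    rw [hGdef]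
    rw [Polynomial.map_sub, Polynomial.map_mul, Polynomial.map_C, Polynomial.map_C,
      Polynomial.map_X]
    have hCb : Polynomial.C (ρ (aCp m)) * Polynomial.C β = Polynomial.C (ρ (bCp m)) := by
      rw [← Polynomial.C_mul, hβdef, mul_div_cancel₀ _ hu]
    rw [← hCb]
    ring
  have hCu : Polynomial.C (ρ (aCp m)) * Polynomial.C (ρ (aCp m))⁻¹ = 1 := by
    rw [← Polynomial.C_mul, mul_inv_cancel₀ hu, Polynomial.C_1]
  have hdvd2 : G.map ρ ∣ F.map ρ := by
    obtain ⟨t, ht⟩ := hdvd1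
    refine ⟨Polynomial.C (ρ (aCp m))⁻¹ * t, ?_⟩
    rw [hGmap, ht]
    calc (Polynomial.X - Polynomial.C β) * t
        = (Polynomial.C (ρ (aCp m)) * Polynomial.C (ρ (aCp m))⁻¹) *
            ((Polynomial.X - Polynomial.C β) * t) := by rw [hCu, one_mul]
      _ = Polynomial.C (ρ (aCp m)) * (Polynomial.X - Polynomial.C β) *
            (Polynomial.C (ρ (aCp m))⁻¹ * t) := by ring
  have hcont0 : F.content ≠ 0 := by rwa [Ne, Polynomial.content_eq_zero_iff]
  have hρc : ρ F.content ≠ 0 := fun h => hcont0 (hρinj (by simpa using h))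
  have hCc : Polynomial.C (ρ F.content) * Polynomial.C (ρ F.content)⁻¹ = 1 := by
    rw [← Polynomial.C_mul, mul_inv_cancel₀ hρc, Polynomial.C_1]
  have hFfact : F.map ρ = Polynomial.C (ρ F.content) * (F.primPart).map ρ := by
    conv_lhs => rw [F.eq_C_content_mul_primPart]
    rw [Polynomial.map_mul, Polynomial.map_C]
  have hdvd3 : G.map ρ ∣ (F.primPart).map ρ := by
    obtain ⟨t, ht⟩ := hdvd2
    rw [hFfact] at ht
    refine ⟨Polynomial.C (ρ F.content)⁻¹ * t, ?_⟩
    calc (F.primPart).map ρ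
        = (Polynomial.C (ρ F.content) * Polynomial.C (ρ F.content)⁻¹) * (F.primPart).map ρ := by
          rw [hCc, one_mul]
      _ = Polynomial.C (ρ F.content)⁻¹ * (Polynomial.C (ρ F.content) * (F.primPart).map ρ) := by
          ring
      _ = Polynomial.C (ρ F.content)⁻¹ * (G.map ρ * t) := by rw [← ht]
      _ = G.map ρ * (Polynomial.C (ρ F.content)⁻¹ * t) := by ring
  have hdvd4 : G ∣ F.primPart :=
    (G_primitive m).dvd_of_fraction_map_dvd_fraction_map hdvd3
  have hdvd5 : G ∣ F := hdvd4.trans F.primPart_dvd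
  have h6 := map_dvd E.symm (hEp ▸ hdvd5)
  rw [hFdef] at h6
  simpa using h6

end ClusterAux

open ClusterAux in
/-- presentation of the type `A_r` cluster algebra:
`ℤ[t_0, ..., t_r]/(P_{r+1}(t_0, ..., t_r) - 1)` is isomorphic, as a `ℤ`-algebra, to the
subring of `ℚ(u_0, ..., u_{r-1})` generated by the `u_i` and the `x_i`, via
`t_i ↦ x_i` for `0 ≤ i ≤ r-1` and `t_r ↦ u_{r-1}`. -/
theorem cluster_algebra_presentation_typeA (r : ℕ) (hr : 1 ≤ r) :
    ∃ φ : (MvPolynomial (Fin (r + 1)) ℤ ⧸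
        Ideal.span {cheb (r + 1) (fun k => if h : k < r + 1 then X (⟨k, h⟩ : Fin (r + 1)) else 0)
          - 1}) ≃ₐ[ℤ]
      Algebra.adjoin ℤ ((Set.range fun i : Fin r => uu r i) ∪ (Set.range fun i : Fin r => xx r i)),
      (∀ i : Fin r, (φ (Ideal.Quotient.mk _ (X (Fin.castSucc i))) : FF r) = xx r i) ∧
        (φ (Ideal.Quotient.mk _ (X (Fin.last r))) : FF r) = uu r ((r : ℤ) - 1) := by
  obtain ⟨m, rfl⟩ : ∃ m, r = m + 1 := ⟨r - 1, by omega⟩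
  classical
  set p : MvPolynomial (Fin (m+1+1)) ℤ :=
    cheb (m+1+1) (fun k => if h : k < m+1+1 then X (⟨k, h⟩ : Fin (m+1+1)) else 0) - 1 with hpdef
  have hptg : p = cheb (m+2) (tg (m+1)) - 1 := rfl
  set I := Ideal.span {p} with hIdef
  have hker0 : ∀ a ∈ I, psi (m+1) a = 0 := by
    intro a ha
    rw [hIdef, Ideal.mem_span_singleton] at ha
    obtain ⟨c, rfl⟩ := ha
    rw [map_mul, hptg, psi_p_zero, zero_mul]
  set φ₀ := Ideal.Quotient.liftₐ I (psi (m+1)) hker0 with hφ₀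
  have hmk : ∀ g, φ₀ (Ideal.Quotient.mk I g) = psi (m+1) g := fun g => rfl
  have hT : ∀ z, φ₀ z ∈ Algebra.adjoin ℤ
      ((Set.range fun i : Fin (m+1) => uu (m+1) i) ∪ (Set.range fun i : Fin (m+1) => xx (m+1) i)) := by
    intro z
    obtain ⟨g, rfl⟩ := Ideal.Quotient.mk_surjective z
    rw [hmk]
    rw [← range_psi (m+1) (by omega)]
    rw [Algebra.adjoin_range_eq_range_aeval]
    exact ⟨g, rfl⟩
  set φ₁ := φ₀.codRestrict _ hT with hφ₁
  have hinj : Function.Injective φ₁ := by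
    rw [hφ₁, AlgHom.injective_codRestrict]
    rw [injective_iff_map_eq_zero]
    intro a ha
    obtain ⟨g, rfl⟩ := Ideal.Quotient.mk_surjective a
    rw [hmk] at ha
    have hdvd := ker_psi_le m g ha
    rw [Ideal.Quotient.eq_zero_iff_mem, hIdef, Ideal.mem_span_singleton, hptg]
    exact hdvd
  have hsurj : Function.Surjective φ₁ := by
    rintro ⟨t, ht⟩
    rw [← range_psi (m+1) (by omega), Algebra.adjoin_range_eq_range_aeval] at ht
    obtain ⟨g, hg⟩ := ht
    exact ⟨Ideal.Quotient.mk I g, Subtype.ext (by rw [hφ₁, AlgHom.coe_codRestrict, hmk]; exact hg)⟩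
  refine ⟨AlgEquiv.ofBijective φ₁ ⟨hinj, hsurj⟩, ?_, ?_⟩
  · intro i
    show ((φ₁ (Ideal.Quotient.mk I (X (Fin.castSucc i))) : _) : FF (m+1)) = xx (m+1) i
    rw [hφ₁, AlgHom.coe_codRestrict, hmk]
    rw [psi, MvPolynomial.aeval_X]
    simp only [gfun, Fin.coe_castSucc]
    rw [if_pos i.isLt]
  · show ((φ₁ (Ideal.Quotient.mk I (X (Fin.last (m+1)))) : _) : FF (m+1)) = uu (m+1) (((m:ℤ)+1) - 1)
    rw [hφ₁, AlgHom.coe_codRestrict, hmk]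
    rw [psi, MvPolynomial.aeval_X]
    simp only [gfun, Fin.val_last]
    rw [if_neg (lt_irrefl _)]
    norm_num
end

section
/- Let S_n denote the normalized Chebyshev polynomials of the second kind (S_0 = 1, S_1(x) = x, S_{n+1}(x) = x S_n(x) − S_{n-1}(x)). Then for all m, n, j with 0 < j < n and m > n − j: S_m(x) S_n(x) = S_{m+j}(x) S_{n-j}(x) + S_{j-1}(x) S_{m+j-n-1}(x). -/
open MvPolynomial Polynomial

/-- Normalized Chebyshev polynomials of the second kind. -/
noncomputable def chebS : ℕ → Polynomial ℤ
  | 0 => 1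
  | 1 => Polynomial.X
  | (n + 2) => Polynomial.X * chebS (n + 1) - chebS n

lemma chebS_zero : chebS 0 = 1 := rfl
lemma chebS_one : chebS 1 = Polynomial.X := rfl
lemma chebS_add_two (n : ℕ) : chebS (n + 2) = Polynomial.X * chebS (n + 1) - chebS n := rfl

lemma chebS_L : ∀ k j : ℕ,
    chebS (k + 1) * chebS (j + 1) = chebS (j + k + 2) + chebS j * chebS k := by
  intro k
  induction k using Nat.twoStepInduction with
  | zero =>
    intro j
    have h := chebS_add_two j
    simp only [Nat.zero_add, Nat.add_zero, chebS_one, chebS_zero]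
    linear_combination -h
  | one =>
    intro j
    have h1 : chebS (j + 2) = Polynomial.X * chebS (j + 1) - chebS j := chebS_add_two j
    have h2 : chebS (j + 3) = Polynomial.X * chebS (j + 2) - chebS (j + 1) := chebS_add_two (j + 1)
    have h0 : chebS 2 = Polynomial.X * Polynomial.X - 1 := by
      rw [chebS_add_two, chebS_one, chebS_zero]
    show chebS 2 * chebS (j + 1) = chebS (j + 3) + chebS j * chebS 1
    rw [h0, chebS_one]
    linear_combination -h2 - Polynomial.X * h1
  | more k ih1 ih2 =>
    intro j
    have e1 : chebS (k + 2) * chebS (j + 1) = chebS (j + k + 3) + chebS j * chebS (k + 1) := ih2 j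
    have e2 : chebS (k + 1) * chebS (j + 1) = chebS (j + k + 2) + chebS j * chebS k := ih1 j
    have h3 : chebS (k + 3) = Polynomial.X * chebS (k + 2) - chebS (k + 1) := chebS_add_two (k + 1)
    have hjk : chebS (j + k + 4) = Polynomial.X * chebS (j + k + 3) - chebS (j + k + 2) :=
      chebS_add_two (j + k + 2)
    have rk : chebS (k + 2) = Polynomial.X * chebS (k + 1) - chebS k := chebS_add_two k
    show chebS (k + 3) * chebS (j + 1) = chebS (j + k + 4) + chebS j * chebS (k + 2)
    linear_combination chebS (j + 1) * h3 + Polynomial.X * e1 - e2 - hjk - chebS j * rk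

lemma chebS_A : ∀ b j k : ℕ,
    chebS (b + k + 1) * chebS (b + j + 1) =
      chebS (b + j + k + 2) * chebS b + chebS j * chebS k := by
  intro b
  induction b with
  | zero =>
    intro j k
    simpa [chebS_zero, add_comm, add_assoc, add_left_comm] using chebS_L k j
  | succ b ih =>
    intro j k
    have e1 : chebS (b + k + 1 + 1) * chebS (b + j + 1 + 1) =
        chebS ((b + j + 1) + (b + k + 1) + 2) + chebS (b + j + 1) * chebS (b + k + 1) :=
      chebS_L (b + k + 1) (b + j + 1)
    have e2 := ih j k
    have e3 := chebS_L b (b + j + k + 2)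
    have h1 : b + 1 + k + 1 = b + k + 1 + 1 := by ring
    have h2 : b + 1 + j + 1 = b + j + 1 + 1 := by ring
    have h3 : b + 1 + j + k + 2 = b + j + k + 2 + 1 := by ring
    have h4 : (b + j + 1) + (b + k + 1) + 2 = b + j + k + 2 + b + 2 := by ring
    rw [h1, h2, h3, e1, h4]
    linear_combination e2 - e3

/-- the multiplication formula for normalized Chebyshev polynomials of
the second kind (rank-1 case of the multiplication theorem in homogeneous tubes). -/
theorem chebS_multiplication (m n j : ℕ) (hj : 0 < j) (hjn : j < n) (hm : m > n - j) :
    chebS m * chebS n = chebS (m + j) * chebS (n - j) + chebS (j - 1) * chebS (m + j - n - 1) := by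
  obtain ⟨b, k, j', hb, hk, hj'⟩ : ∃ b k j', n - j = b ∧ m = b + k + 1 ∧ j = j' + 1 := by
    exact ⟨n - j, m - (n - j) - 1, j - 1, rfl, by omega, by omega⟩
  have hn : n = b + j' + 1 := by omega
  have hmj : m + j = b + (j' + k + 1) + 1 := by omega
  have hmjn : m + j - n - 1 = k := by omega
  rw [hb, hmjn, hmj, hn, hk, hj']
  have h4 : b + (j' + k + 1) + 1 = b + j' + k + 2 := by ring
  have h5 : j' + 1 - 1 = j' := by omega
  rw [h4, h5]
  exact chebS_A b j' k
end
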